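/- arXiv:2004.12479 — 7 statements merged into one kernel-verified Lean document; each statement's English description precedes it below -/
import Mathlib

section
/- Let m ≥ 1 and let (v_n)_{n ∈ ℤ^m \ {0}} be complex coefficients with |v_n| ≤ K e^{−c‖n‖} for some constants K, c > 0. Then for Lebesgue-almost every ω ∈ ℝ^m the series Σ_{n ≠ 0} |v_n|² / (n·ω)² converges, i.e. Δ(ω) < ∞ almost everywhere. -/
open MeasureTheory Filter Topology
open scoped ENNReal

/-- Dot product of an integer vector with a real frequency vector. -/
noncomputable def dotZ {m : ℕ} (n : Fin m → ℤ) (ω : EuclideanSpace ℝ (Fin m)) : ℝ :=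
  ∑ i, (n i : ℝ) * ω i

/-- Euclidean norm of an integer vector. -/
noncomputable def normZ {m : ℕ} (n : Fin m → ℤ) : ℝ :=
  Real.sqrt (∑ i, ((n i : ℝ)) ^ 2)

/-- The trajectory size Δ(ω) = ( Σ_{n ≠ 0} |v_n|² / (n·ω)² )^{1/2} ∈ [0,∞],
    with a summand having `n·ω = 0` and `v n ≠ 0` equal to `∞`. -/
noncomputable def trajSize {m : ℕ} (v : (Fin m → ℤ) → ℂ) (ω : EuclideanSpace ℝ (Fin m)) :
    ℝ≥0∞ :=
  (∑' n : {n : Fin m → ℤ // n ≠ 0},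
      (ENNReal.ofReal (‖v n.1‖)) ^ 2 / ENNReal.ofReal (dotZ n.1 ω ^ 2)) ^
    ((1 : ℝ) / 2)

section TrajAux
open Set

lemma traj_tsum_pi_pow (k : ℕ) (f : ℤ → ℝ≥0∞) :
    ∑' n : Fin k → ℤ, ∏ i, f (n i) = (∑' j : ℤ, f j) ^ k := by
  induction k with
  | zero =>
    rw [tsum_eq_single (fun i => 0) (fun b hb => absurd (Subsingleton.elim b _) hb)]
    simp
  | succ k ih =>
    rw [← (Fin.consEquiv (fun _ : Fin (k+1) => ℤ)).tsum_eq, pow_succ]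
    have : ∀ p : ℤ × (Fin k → ℤ),
        (∏ i, f ((Fin.consEquiv (fun _ : Fin (k+1) => ℤ)) p i)) = f p.1 * ∏ i, f (p.2 i) := by
      intro p
      rw [Fin.prod_univ_succ]
      simp [Fin.consEquiv]
    calc ∑' p : ℤ × (Fin k → ℤ), ∏ i, f ((Fin.consEquiv (fun _ : Fin (k+1) => ℤ)) p i)
        = ∑' (a : ℤ) (b : Fin k → ℤ), f a * ∏ i, f (b i) := by
          rw [ENNReal.tsum_prod']; exact tsum_congr fun a => tsum_congr fun b => this (a, b)
      _ = ∑' a : ℤ, f a * ∑' b : Fin k → ℤ, ∏ i, f (b i) := by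
          exact tsum_congr fun a => ENNReal.tsum_mul_left
      _ = (∑' j : ℤ, f j) ^ k * ∑' j : ℤ, f j := by
          rw [ENNReal.tsum_mul_right, ih]; ring

lemma traj_tsum_int_exp {β : ℝ} (hβ : 0 < β) :
    ∑' j : ℤ, ENNReal.ofReal (Real.exp (-β * |(j : ℝ)|)) < ⊤ := by
  have hgeom : Summable (fun n : ℕ => Real.exp (-β) ^ n) :=
    summable_geometric_of_lt_one (Real.exp_nonneg _)
      (Real.exp_lt_one_iff.2 (by linarith))
  have hs : Summable (fun j : ℤ => Real.exp (-β * |(j : ℝ)|)) := by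
    apply Summable.of_nat_of_neg
    · refine hgeom.congr fun n => ?_
      rw [← Real.exp_nat_mul]
      norm_num [abs_of_nonneg, mul_comm]
    · refine hgeom.congr fun n => ?_
      rw [← Real.exp_nat_mul]
      push_cast
      rw [abs_neg, abs_of_nonneg (by positivity)]
      ring_nf
  rw [← ENNReal.ofReal_tsum_of_nonneg (fun _ => (Real.exp_pos _).le) hs]
  exact ENNReal.ofReal_lt_top

lemma traj_abs_le_normZ {m : ℕ} (n : Fin m → ℤ) (i : Fin m) : |(n i : ℝ)| ≤ normZ n := by
  rw [normZ, ← Real.sqrt_sq_eq_abs]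
  exact Real.sqrt_le_sqrt (Finset.single_le_sum (f := fun i => ((n i : ℝ)) ^ 2)
    (fun i _ => sq_nonneg _) (Finset.mem_univ i))

lemma traj_tsum_exp_lt_top (m : ℕ) (hm : 0 < m) {b : ℝ} (hb : 0 < b) :
    ∑' n : Fin m → ℤ, ENNReal.ofReal (Real.exp (-b * normZ n)) < ⊤ := by
  have key : ∀ n : Fin m → ℤ,
      ENNReal.ofReal (Real.exp (-b * normZ n))
        ≤ ∏ i, ENNReal.ofReal (Real.exp (-(b / m) * |(n i : ℝ)|)) := by
    intro n
    rw [← ENNReal.ofReal_prod_of_nonneg (fun i _ => (Real.exp_pos _).le), ← Real.exp_sum]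
    apply ENNReal.ofReal_le_ofReal
    apply Real.exp_le_exp.2
    have hsum : ∑ i, |(n i : ℝ)| ≤ (m : ℝ) * normZ n := by
      calc ∑ i, |(n i : ℝ)| ≤ ∑ _i : Fin m, normZ n :=
            Finset.sum_le_sum fun i _ => traj_abs_le_normZ n i
        _ = (m : ℝ) * normZ n := by simp [mul_comm]
    have h1 : ∑ i, -(b / m) * |(n i : ℝ)| = -(b / m) * ∑ i, |(n i : ℝ)| := by
      rw [Finset.mul_sum]
    rw [h1]
    have hbm : 0 < b / (m : ℝ) := by positivity
    have hmm : b / (m : ℝ) * ((m : ℝ) * normZ n) = b * normZ n := by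
      field_simp
    nlinarith [mul_le_mul_of_nonneg_left hsum hbm.le, hmm]
  calc ∑' n : Fin m → ℤ, ENNReal.ofReal (Real.exp (-b * normZ n))
      ≤ ∑' n : Fin m → ℤ, ∏ i, ENNReal.ofReal (Real.exp (-(b / m) * |(n i : ℝ)|)) :=
        ENNReal.tsum_le_tsum key
    _ = (∑' j : ℤ, ENNReal.ofReal (Real.exp (-(b / m) * |(j : ℝ)|))) ^ m :=
        traj_tsum_pi_pow m (fun j => ENNReal.ofReal (Real.exp (-(b / m) * |(j : ℝ)|)))
    _ < ⊤ := ENNReal.pow_lt_top (traj_tsum_int_exp (by positivity))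

noncomputable def trajJ : ℝ≥0∞ :=
  ∫⁻ t in Set.Icc (-1 : ℝ) 1, (ENNReal.ofReal (Real.sqrt |t|))⁻¹

section Main
variable {m : ℕ}

lemma traj_det (n : Fin m → ℤ) (i : Fin m) :
    ((1 : Matrix (Fin m) (Fin m) ℝ).updateRow i (fun k => (n k : ℝ))).det = (n i : ℝ) := by
  classical
  have hrow : (fun k => (n k : ℝ)) = ∑ k, (n k : ℝ) • (1 : Matrix (Fin m) (Fin m) ℝ) k := by
    funext j
    rw [Finset.sum_apply]
    simp only [Pi.smul_apply, Matrix.one_apply, smul_eq_mul, mul_ite, mul_one, mul_zero]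
    rw [Finset.sum_ite_eq' Finset.univ j (fun k => (n k : ℝ))]
    simp
  rw [hrow, Matrix.det_updateRow_sum]
  simp

lemma traj_apply (n : Fin m → ℤ) (i : Fin m) (x : Fin m → ℝ) (j : Fin m) :
    Matrix.toLin' ((1 : Matrix (Fin m) (Fin m) ℝ).updateRow i (fun k => (n k : ℝ))) x j
      = if j = i then (∑ k, (n k : ℝ) * x k) else x j := by
  classical
  rw [Matrix.toLin'_apply]
  by_cases hj : j = i
  · subst hj
    simp [Matrix.mulVec, dotProduct, Matrix.updateRow_self]
  · simp only [Matrix.mulVec, dotProduct, Matrix.updateRow_ne hj, if_neg hj,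
      Matrix.one_apply, ite_mul, one_mul, zero_mul]
    rw [Finset.sum_ite_eq Finset.univ j]
    simp

/-- The key uniform integral estimate. -/
lemma traj_main_bound (m' : ℕ) (R : ℕ) (n : Fin (m' + 1) → ℤ) (hn : n ≠ 0) :
    ∫⁻ x : Fin (m' + 1) → ℝ in Set.pi Set.univ (fun _ => Set.Icc (-(R:ℝ)) R),
        (ENNReal.ofReal (Real.sqrt |∑ k, (n k : ℝ) * x k|))⁻¹
      ≤ (trajJ + ENNReal.ofReal (2 * R * (m' + 1))) * (ENNReal.ofReal (2 * R)) ^ m' := by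
  classical
  -- choose the coordinate with maximal |n i|
  obtain ⟨i, -, hi⟩ := Finset.exists_max_image Finset.univ (fun k => |(n k : ℝ)|)
    Finset.univ_nonempty
  have hN1 : (1 : ℝ) ≤ |(n i : ℝ)| := by
    obtain ⟨k, hk⟩ := Function.ne_iff.1 hn
    refine le_trans ?_ (hi k (Finset.mem_univ k))
    rw [← Int.cast_abs]
    exact_mod_cast Int.one_le_abs hk
  have hNpos : (0 : ℝ) < |(n i : ℝ)| := lt_of_lt_of_le one_pos hN1
  set M : Matrix (Fin (m' + 1)) (Fin (m' + 1)) ℝ :=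
    (1 : Matrix (Fin (m' + 1)) (Fin (m' + 1)) ℝ).updateRow i (fun k => (n k : ℝ)) with hM
  set T := Matrix.toLin' M with hT
  have hdet : LinearMap.det T = (n i : ℝ) := by
    rw [hT, LinearMap.det_toLin']; exact traj_det n i
  have hdet0 : LinearMap.det T ≠ 0 := by rw [hdet]; exact fun h => by simp [h] at hNpos
  have hTmeas : Measurable T := (LinearMap.continuous_on_pi T).measurable
  set A : ℝ := (R : ℝ) * ∑ k, |(n k : ℝ)| with hA
  have hA0 : 0 ≤ A := by positivity
  set F : ℝ → ℝ≥0∞ :=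
    (Set.Icc (-A) A).indicator (fun t => (ENNReal.ofReal (Real.sqrt |t|))⁻¹) with hF
  set box1 : ℝ → ℝ≥0∞ := (Set.Icc (-(R:ℝ)) R).indicator 1 with hbox1
  set H : (Fin (m' + 1) → ℝ) → ℝ≥0∞ :=
    fun y => F (y i) * ∏ j : Fin m', box1 (y (i.succAbove j)) with hH
  have hFmeas : Measurable F := by
    apply Measurable.indicator ?_ measurableSet_Icc
    exact (ENNReal.measurable_ofReal.comp
      (Real.continuous_sqrt.measurable.comp measurable_abs)).inv
  have hbox1meas : Measurable box1 := Measurable.indicator measurable_const measurableSet_Icc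
  have hHmeas : Measurable H := by
    apply Measurable.mul
    · exact hFmeas.comp (measurable_pi_apply i)
    · exact Finset.measurable_prod _ fun j _ => hbox1meas.comp (measurable_pi_apply _)
  have hpoint : ∀ x ∈ Set.pi Set.univ (fun _ : Fin (m' + 1) => Set.Icc (-(R:ℝ)) R),
      (ENNReal.ofReal (Real.sqrt |∑ k, (n k : ℝ) * x k|))⁻¹ ≤ H (T x) := by
    intro x hx
    have hxk : ∀ k, |x k| ≤ (R : ℝ) := fun k => abs_le.2 (hx k (Set.mem_univ k))
    have hLx : |∑ k, (n k : ℝ) * x k| ≤ A := by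
      calc |∑ k, (n k : ℝ) * x k| ≤ ∑ k, |(n k : ℝ) * x k| := Finset.abs_sum_le_sum_abs _ _
        _ ≤ ∑ k, |(n k : ℝ)| * (R : ℝ) := by
            refine Finset.sum_le_sum fun k _ => ?_
            rw [abs_mul]
            exact mul_le_mul_of_nonneg_left (hxk k) (abs_nonneg _)
        _ = A := by rw [hA, ← Finset.sum_mul]; ring
    have h1 : T x i = ∑ k, (n k : ℝ) * x k := by rw [hT, traj_apply n i x i, if_pos rfl]
    have h2 : ∀ j : Fin m', T x (i.succAbove j) = x (i.succAbove j) := fun j => by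
      rw [hT, traj_apply n i x, if_neg (Fin.succAbove_ne i j)]
    rw [hH]
    simp only [h1, h2]
    have hFval : F (∑ k, (n k : ℝ) * x k)
        = (ENNReal.ofReal (Real.sqrt |∑ k, (n k : ℝ) * x k|))⁻¹ := by
      rw [hF, Set.indicator_of_mem (Set.mem_Icc.2 (abs_le.1 hLx))]
    have hb : ∀ j : Fin m', box1 (x (i.succAbove j)) = 1 := fun j => by
      rw [hbox1, Set.indicator_of_mem (Set.mem_Icc.2 (abs_le.1 (hxk _)))]
      rfl
    rw [hFval]
    simp [hb]
  -- change of variables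
  have hmap := Real.map_linearMap_volume_pi_eq_smul_volume_pi hdet0
  have step1 : ∫⁻ x : Fin (m' + 1) → ℝ in Set.pi Set.univ (fun _ => Set.Icc (-(R:ℝ)) R),
      (ENNReal.ofReal (Real.sqrt |∑ k, (n k : ℝ) * x k|))⁻¹
      ≤ ENNReal.ofReal |((n i : ℝ))⁻¹| * ∫⁻ y, H y := by
    calc ∫⁻ x : Fin (m' + 1) → ℝ in Set.pi Set.univ (fun _ => Set.Icc (-(R:ℝ)) R),
        (ENNReal.ofReal (Real.sqrt |∑ k, (n k : ℝ) * x k|))⁻¹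
        ≤ ∫⁻ x : Fin (m' + 1) → ℝ in Set.pi Set.univ (fun _ => Set.Icc (-(R:ℝ)) R),
          H (T x) := setLIntegral_mono (hHmeas.comp hTmeas) hpoint
      _ ≤ ∫⁻ x, H (T x) := setLIntegral_le_lintegral _ _
      _ = ∫⁻ y, H y ∂(Measure.map T volume) := (lintegral_map hHmeas hTmeas).symm
      _ = ENNReal.ofReal |((n i : ℝ))⁻¹| * ∫⁻ y, H y := by
          rw [hmap, lintegral_smul_measure, hdet, abs_inv, smul_eq_mul]
  -- compute ∫⁻ H
  have hsplit : ∫⁻ y, H y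
      = (∫⁻ t, F t) * (ENNReal.ofReal (2 * R)) ^ m' := by
    have hmp := measurePreserving_piFinSuccAbove (fun _ : Fin (m' + 1) => (volume : Measure ℝ)) i
    have hg : Measurable (fun p : ℝ × (Fin m' → ℝ) => F p.1 * ∏ j, box1 (p.2 j)) := by
      apply Measurable.mul
      · exact hFmeas.comp measurable_fst
      · exact Finset.measurable_prod _ fun j _ =>
          hbox1meas.comp ((measurable_pi_apply _).comp measurable_snd)
    calc ∫⁻ y, H y
        = ∫⁻ y, H y ∂(Measure.pi fun _ : Fin (m' + 1) => (volume : Measure ℝ)) := by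
          rw [← volume_pi]
      _ = ∫⁻ p : ℝ × (Fin m' → ℝ), F p.1 * ∏ j, box1 (p.2 j)
            ∂((volume : Measure ℝ).prod (Measure.pi fun _ : Fin m' => volume)) := by
          rw [← hmp.lintegral_comp hg]
          rfl
      _ = (∫⁻ t, F t) * ∫⁻ z : Fin m' → ℝ, ∏ j, box1 (z j)
            ∂(Measure.pi fun _ : Fin m' => volume) :=
          lintegral_prod_mul (f := F) (g := fun z : Fin m' → ℝ => ∏ j, box1 (z j))
            (μ := (volume : Measure ℝ)) (ν := Measure.pi fun _ : Fin m' => volume)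
            hFmeas.aemeasurable
            ((Finset.measurable_prod Finset.univ fun j _ =>
              hbox1meas.comp (measurable_pi_apply j)).aemeasurable)
      _ = (∫⁻ t, F t) * (ENNReal.ofReal (2 * R)) ^ m' := by
          congr 1
          have hprod : (fun z : Fin m' → ℝ => ∏ j, box1 (z j))
              = (Set.pi Set.univ fun _ : Fin m' => Set.Icc (-(R:ℝ)) R).indicator 1 := by
            funext z
            by_cases hz : z ∈ Set.pi Set.univ fun _ : Fin m' => Set.Icc (-(R:ℝ)) R
            · rw [Set.indicator_of_mem hz]
              have : ∀ j, box1 (z j) = 1 := fun j => by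
                rw [hbox1, Set.indicator_of_mem (hz j (Set.mem_univ j))]
                rfl
              simp [this]
            · rw [Set.indicator_of_notMem hz]
              obtain ⟨j, hj⟩ := by
                simpa only [Set.mem_pi, Set.mem_univ, forall_true_left, not_forall] using hz
              refine Finset.prod_eq_zero (Finset.mem_univ j) ?_
              rw [hbox1, Set.indicator_of_notMem hj]
          rw [hprod, lintegral_indicator_one (MeasurableSet.univ_pi fun _ => measurableSet_Icc),
            Measure.pi_pi]
          simp only [Real.volume_Icc]
          rw [Finset.prod_const, Finset.card_univ, Fintype.card_fin]
          congr 2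
          ring
  -- bound ∫⁻ F
  have hFbound : (∫⁻ t, F t) ≤ trajJ + ENNReal.ofReal (2 * A) := by
    have hle : ∀ t, F t ≤ (Set.Icc (-1 : ℝ) 1).indicator
        (fun t => (ENNReal.ofReal (Real.sqrt |t|))⁻¹) t
        + (Set.Icc (-A) A).indicator 1 t := by
      intro t
      by_cases hmem : t ∈ Set.Icc (-A) A
      · rw [hF, Set.indicator_of_mem hmem]
        by_cases h1 : t ∈ Set.Icc (-1 : ℝ) 1
        · rw [Set.indicator_of_mem h1]
          exact le_add_right le_rfl
        · have h1' : 1 < |t| := by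
            by_contra hcon
            push_neg at hcon
            exact h1 (Set.mem_Icc.2 (abs_le.1 hcon))
          have : (1 : ℝ≥0∞) ≤ ENNReal.ofReal (Real.sqrt |t|) := by
            rw [show (1 : ℝ≥0∞) = ENNReal.ofReal 1 by simp]
            apply ENNReal.ofReal_le_ofReal
            rw [show (1:ℝ) = Real.sqrt 1 by simp]
            exact Real.sqrt_le_sqrt h1'.le
          calc (ENNReal.ofReal (Real.sqrt |t|))⁻¹ ≤ 1 := ENNReal.inv_le_one.2 this
            _ = (Set.Icc (-A) A).indicator 1 t := by
                rw [Set.indicator_of_mem hmem]; rfl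
            _ ≤ _ := le_add_left le_rfl
      · rw [hF, Set.indicator_of_notMem hmem]
        exact zero_le
    calc ∫⁻ t, F t ≤ ∫⁻ t, ((Set.Icc (-1 : ℝ) 1).indicator
          (fun t => (ENNReal.ofReal (Real.sqrt |t|))⁻¹) t
          + (Set.Icc (-A) A).indicator 1 t) := lintegral_mono hle
      _ = trajJ + ENNReal.ofReal (2 * A) := by
          rw [lintegral_add_left]
          · congr 1
            · rw [lintegral_indicator measurableSet_Icc]; rfl
            · rw [lintegral_indicator_one measurableSet_Icc, Real.volume_Icc]
              congr 1; ring
          · exact Measurable.indicator ((ENNReal.measurable_ofReal.comp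
              (Real.continuous_sqrt.measurable.comp measurable_abs)).inv) measurableSet_Icc
  -- final arithmetic
  have harith : ENNReal.ofReal |((n i : ℝ))⁻¹| * (trajJ + ENNReal.ofReal (2 * A))
      ≤ trajJ + ENNReal.ofReal (2 * R * (m' + 1)) := by
    have hsumA : ∑ k, |(n k : ℝ)| ≤ ((m' : ℝ) + 1) * |(n i : ℝ)| := by
      calc ∑ k, |(n k : ℝ)| ≤ ∑ _k : Fin (m' + 1), |(n i : ℝ)| :=
            Finset.sum_le_sum fun k _ => hi k (Finset.mem_univ k)
        _ = ((m' : ℝ) + 1) * |(n i : ℝ)| := by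
            rw [Finset.sum_const, Finset.card_univ, Fintype.card_fin]
            push_cast; ring
    have hreal : |((n i : ℝ))⁻¹| * (2 * A) ≤ 2 * R * (m' + 1) := by
      rw [abs_inv, inv_mul_le_iff₀ hNpos, hA]
      have hR0 : (0 : ℝ) ≤ 2 * (R : ℝ) := by positivity
      calc 2 * ((R:ℝ) * ∑ k, |(n k : ℝ)|) ≤ 2 * (R:ℝ) * (((m' : ℝ) + 1) * |(n i : ℝ)|) := by
            nlinarith [hsumA, hR0]
        _ = |(n i : ℝ)| * (2 * R * (m' + 1)) := by ring
    have h1 : ENNReal.ofReal |((n i : ℝ))⁻¹| ≤ 1 := by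
      apply ENNReal.ofReal_le_one.2
      rw [abs_inv]
      exact inv_le_one_of_one_le₀ hN1
    rw [mul_add]
    apply add_le_add
    · calc ENNReal.ofReal |((n i : ℝ))⁻¹| * trajJ ≤ 1 * trajJ := mul_le_mul_left h1 _
        _ = trajJ := one_mul _
    · rw [← ENNReal.ofReal_mul (abs_nonneg _)]
      exact ENNReal.ofReal_le_ofReal hreal
  calc ∫⁻ x : Fin (m' + 1) → ℝ in Set.pi Set.univ (fun _ => Set.Icc (-(R:ℝ)) R),
      (ENNReal.ofReal (Real.sqrt |∑ k, (n k : ℝ) * x k|))⁻¹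
      ≤ ENNReal.ofReal |((n i : ℝ))⁻¹| * ∫⁻ y, H y := step1
    _ = (ENNReal.ofReal |((n i : ℝ))⁻¹| * (∫⁻ t, F t)) * (ENNReal.ofReal (2 * R)) ^ m' := by
        rw [hsplit]; ring
    _ ≤ (ENNReal.ofReal |((n i : ℝ))⁻¹| * (trajJ + ENNReal.ofReal (2 * A)))
          * (ENNReal.ofReal (2 * R)) ^ m' :=
        mul_le_mul_left (mul_le_mul_right hFbound _) _
    _ ≤ (trajJ + ENNReal.ofReal (2 * R * (m' + 1))) * (ENNReal.ofReal (2 * R)) ^ m' :=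
        mul_le_mul_left harith _

end Main

lemma traj_integrableOn_abs_rpow :
    IntegrableOn (fun t : ℝ => |t| ^ (-(1/2) : ℝ)) (Set.Icc (-1) 1) := by
  have h1 : IntegrableOn (fun t : ℝ => t ^ (-(1/2) : ℝ)) (Set.Ioo 0 1) :=
    (intervalIntegral.integrableOn_Ioo_rpow_iff one_pos).2 (by norm_num)
  have h1' : IntegrableOn (fun t : ℝ => |t| ^ (-(1/2) : ℝ)) (Set.Ioo 0 1) :=
    h1.congr_fun (fun t ht => by rw [abs_of_pos ht.1]) measurableSet_Ioo
  have h2 : IntegrableOn (fun t : ℝ => |t| ^ (-(1/2) : ℝ)) (Set.Ioo (-1) 0) := by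
    have := (Measure.measurePreserving_neg (volume : Measure ℝ)).integrableOn_comp_preimage
      (Homeomorph.neg ℝ).measurableEmbedding
      (f := fun t : ℝ => |t| ^ (-(1/2) : ℝ)) (s := Set.Ioo (-1 : ℝ) 0)
    rw [← this]
    have hpre : (Neg.neg ⁻¹' Set.Ioo (-1 : ℝ) 0) = Set.Ioo (0 : ℝ) 1 := by
      ext x
      simp only [Set.mem_preimage, Set.mem_Ioo]
      constructor
      · rintro ⟨h1, h2⟩; constructor <;> linarith
      · rintro ⟨h1, h2⟩; constructor <;> linarith
    rw [hpre]
    exact h1'.congr_fun (fun t _ => by simp [Function.comp, abs_neg]) measurableSet_Ioo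
  have h3 : IntegrableOn (fun t : ℝ => |t| ^ (-(1/2) : ℝ)) ({-1, 0, 1} : Set ℝ) := by
    rw [IntegrableOn, Measure.restrict_eq_zero.2 (by
      apply Set.Finite.measure_zero
      exact Set.toFinite _)]
    exact integrable_zero_measure
  refine ((h2.union h1').union h3).mono_set ?_
  intro x hx
  obtain ⟨hl, hr⟩ := hx
  simp only [Set.mem_union, Set.mem_Ioo, Set.mem_insert_iff, Set.mem_singleton_iff]
  rcases lt_trichotomy x 0 with h | h | h
  · rcases eq_or_lt_of_le hl with h' | h'
    · tauto
    · tauto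
  · tauto
  · rcases eq_or_lt_of_le hr with h' | h'
    · tauto
    · tauto

lemma trajJ_ne_top : trajJ ≠ ⊤ := by
  have h0 : ∀ᵐ t ∂(volume.restrict (Set.Icc (-1 : ℝ) 1)), t ≠ 0 := by
    rw [ae_iff]
    have hsub : {a : ℝ | ¬a ≠ 0} ⊆ ({0} : Set ℝ) := fun t ht => by simpa using ht
    refine measure_mono_null hsub ?_
    exact le_antisymm (le_trans (Measure.restrict_apply_le _ _) (by simp)) zero_le
  have hcongr : trajJ = ∫⁻ t in Set.Icc (-1 : ℝ) 1, ENNReal.ofReal (|t| ^ (-(1/2) : ℝ)) := by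
    refine lintegral_congr_ae ?_
    filter_upwards [h0] with t ht
    have habs : 0 < |t| := abs_pos.2 ht
    rw [← ENNReal.ofReal_inv_of_pos (Real.sqrt_pos.2 habs), Real.sqrt_eq_rpow]
    congr 1
    rw [show (-(1/2) : ℝ) = -(1/2) from rfl, Real.rpow_neg habs.le]
  rw [hcongr]
  have hint := traj_integrableOn_abs_rpow
  have := hint.2
  rw [HasFiniteIntegral] at this
  refine ne_of_lt (lt_of_le_of_lt (lintegral_mono fun t => ?_) this)
  exact Real.ofReal_le_enorm _

end TrajAux

/-- If the Fourier coefficients decay exponentially, the series defining Δ(ω)² converges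
(equivalently Δ(ω) < ∞) for Lebesgue-almost every ω ∈ ℝ^m. -/
theorem trajSize_finite_ae
    (m : ℕ) (hm : 1 ≤ m) (v : (Fin m → ℤ) → ℂ)
    (K c : ℝ) (hK : 0 < K) (hc : 0 < c)
    (hdecay : ∀ n : Fin m → ℤ, ‖v n‖ ≤ K * Real.exp (-c * normZ n)) :
    ∀ᵐ ω : EuclideanSpace ℝ (Fin m) ∂volume,
      (∑' n : {n : Fin m → ℤ // n ≠ 0},
        (ENNReal.ofReal (‖v n.1‖)) ^ 2 / ENNReal.ofReal (dotZ n.1 ω ^ 2)) < ⊤ := by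
  classical
  obtain ⟨m', rfl⟩ : ∃ m', m = m' + 1 := ⟨m - 1, (Nat.succ_pred_eq_of_pos hm).symm⟩
  -- the auxiliary majorant function on the plain pi space
  set Gpi : (Fin (m' + 1) → ℝ) → ℝ≥0∞ := fun x =>
    ∑' n : {n : Fin (m' + 1) → ℤ // n ≠ 0},
      ENNReal.ofReal (Real.exp (-(c / 4) * normZ n.1))
        * (ENNReal.ofReal (Real.sqrt |∑ k, (n.1 k : ℝ) * x k|))⁻¹ with hGpi
  have hterm_meas : ∀ n : {n : Fin (m' + 1) → ℤ // n ≠ 0},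
      Measurable (fun x : Fin (m' + 1) → ℝ =>
        (ENNReal.ofReal (Real.sqrt |∑ k, (n.1 k : ℝ) * x k|))⁻¹) := by
    intro n
    have hL : Measurable (fun x : Fin (m' + 1) → ℝ => ∑ k, (n.1 k : ℝ) * x k) :=
      Finset.measurable_sum _ fun k _ => (measurable_pi_apply k).const_mul _
    exact (ENNReal.measurable_ofReal.comp (Real.continuous_sqrt.measurable.comp hL.abs)).inv
  have hGmeas : Measurable Gpi :=
    Measurable.ennreal_tsum fun n => measurable_const.mul (hterm_meas n)
  have hwsum : ∑' n : {n : Fin (m' + 1) → ℤ // n ≠ 0},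
      ENNReal.ofReal (Real.exp (-(c / 4) * normZ n.1)) < ⊤ :=
    lt_of_le_of_lt (ENNReal.tsum_comp_le_tsum_of_injective Subtype.val_injective
        (fun n => ENNReal.ofReal (Real.exp (-(c / 4) * normZ n))))
      (traj_tsum_exp_lt_top (m' + 1) (by omega) (by positivity))
  have hbox_meas : ∀ R : ℕ,
      MeasurableSet (Set.pi Set.univ fun _ : Fin (m' + 1) => Set.Icc (-(R : ℝ)) R) :=
    fun R => MeasurableSet.univ_pi fun _ => measurableSet_Icc
  have hQtop : ∀ R : ℕ,
      (trajJ + ENNReal.ofReal (2 * R * (m' + 1))) * (ENNReal.ofReal (2 * R)) ^ m' ≠ ⊤ := by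
    intro R
    apply ENNReal.mul_ne_top
    · exact ENNReal.add_ne_top.2 ⟨trajJ_ne_top, ENNReal.ofReal_ne_top⟩
    · exact ENNReal.pow_ne_top ENNReal.ofReal_ne_top
  have hRae : ∀ R : ℕ, ∀ᵐ x ∂(volume : Measure (Fin (m' + 1) → ℝ)),
      x ∈ Set.pi Set.univ (fun _ : Fin (m' + 1) => Set.Icc (-(R : ℝ)) R) → Gpi x < ⊤ := by
    intro R
    rw [← ae_restrict_iff' (hbox_meas R)]
    apply ae_lt_top hGmeas
    have hsplit : ∫⁻ x in Set.pi Set.univ (fun _ : Fin (m' + 1) => Set.Icc (-(R : ℝ)) R), Gpi x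
        = ∑' n : {n : Fin (m' + 1) → ℤ // n ≠ 0},
            ENNReal.ofReal (Real.exp (-(c / 4) * normZ n.1))
              * ∫⁻ x in Set.pi Set.univ (fun _ : Fin (m' + 1) => Set.Icc (-(R : ℝ)) R),
                  (ENNReal.ofReal (Real.sqrt |∑ k, (n.1 k : ℝ) * x k|))⁻¹ := by
      rw [hGpi]; beta_reduce; rw [lintegral_tsum fun n => ((hterm_meas n).const_mul _).aemeasurable]
      exact tsum_congr fun n => lintegral_const_mul _ (hterm_meas n)
    rw [hsplit]
    have hle : ∑' n : {n : Fin (m' + 1) → ℤ // n ≠ 0},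
        ENNReal.ofReal (Real.exp (-(c / 4) * normZ n.1))
          * ∫⁻ x in Set.pi Set.univ (fun _ : Fin (m' + 1) => Set.Icc (-(R : ℝ)) R),
              (ENNReal.ofReal (Real.sqrt |∑ k, (n.1 k : ℝ) * x k|))⁻¹
        ≤ ∑' n : {n : Fin (m' + 1) → ℤ // n ≠ 0},
            ENNReal.ofReal (Real.exp (-(c / 4) * normZ n.1))
              * ((trajJ + ENNReal.ofReal (2 * R * (m' + 1)))
                  * (ENNReal.ofReal (2 * R)) ^ m') :=
      ENNReal.tsum_le_tsum fun n => mul_le_mul_right (traj_main_bound m' R n.1 n.2) _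
    refine ne_of_lt (lt_of_le_of_lt hle ?_)
    rw [ENNReal.tsum_mul_right]
    exact ENNReal.mul_lt_top hwsum (lt_top_iff_ne_top.2 (hQtop R))
  have hae_pi : ∀ᵐ x ∂(volume : Measure (Fin (m' + 1) → ℝ)), Gpi x < ⊤ := by
    filter_upwards [ae_all_iff.2 hRae] with x hx
    refine hx ⌈‖x‖⌉₊ fun k _ => ?_
    have h1 : |x k| ≤ ‖x‖ := by
      rw [← Real.norm_eq_abs]
      exact norm_le_pi_norm x k
    have h2 : ‖x‖ ≤ (⌈‖x‖⌉₊ : ℝ) := Nat.le_ceil _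
    exact Set.mem_Icc.2 (abs_le.1 (le_trans h1 h2))
  -- transport to Euclidean space
  have hphi := EuclideanSpace.volume_preserving_symm_measurableEquiv_toLp (Fin (m' + 1))
  have hae_eu : ∀ᵐ ω : EuclideanSpace ℝ (Fin (m' + 1)) ∂volume,
      (∑' n : {n : Fin (m' + 1) → ℤ // n ≠ 0},
        ENNReal.ofReal (Real.exp (-(c / 4) * normZ n.1))
          * (ENNReal.ofReal (Real.sqrt |dotZ n.1 ω|))⁻¹) < ⊤ := by
    rw [← hphi.map_eq] at hae_pi
    exact ((MeasurableEquiv.toLp 2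
      (Fin (m' + 1) → ℝ)).symm.measurableEmbedding.ae_map_iff).mp hae_pi
  filter_upwards [hae_eu] with ω hG
  set G : ℝ≥0∞ := ∑' n : {n : Fin (m' + 1) → ℤ // n ≠ 0},
      ENNReal.ofReal (Real.exp (-(c / 4) * normZ n.1))
        * (ENNReal.ofReal (Real.sqrt |dotZ n.1 ω|))⁻¹ with hGdef
  have hterm : ∀ n : {n : Fin (m' + 1) → ℤ // n ≠ 0},
      ENNReal.ofReal (‖v n.1‖) ^ 2 / ENNReal.ofReal (dotZ n.1 ω ^ 2)
        ≤ (ENNReal.ofReal K) ^ 2 * G ^ 4 * ENNReal.ofReal (Real.exp (-c * normZ n.1)) := by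
    intro n
    set t : ℝ := normZ n.1 with ht
    set d : ℝ := dotZ n.1 ω with hd
    set w : ℝ≥0∞ := ENNReal.ofReal (Real.exp (-(c / 4) * t)) with hw
    set s : ℝ := Real.sqrt |d| with hs
    have hwle : w * (ENNReal.ofReal s)⁻¹ ≤ G := ENNReal.le_tsum n
    have hw0 : w ≠ 0 := (ENNReal.ofReal_pos.2 (Real.exp_pos _)).ne'
    have hwtop : w ≠ ⊤ := ENNReal.ofReal_ne_top
    have hs0 : 0 ≤ s := Real.sqrt_nonneg _
    have hd0 : d ≠ 0 := by
      intro h0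
      have hszero : s = 0 := by rw [hs, h0]; simp
      rw [hszero, ENNReal.ofReal_zero, ENNReal.inv_zero, ENNReal.mul_top hw0] at hwle
      exact hG.ne (top_le_iff.mp hwle)
    have hd2 : ENNReal.ofReal (d ^ 2) = (ENNReal.ofReal s) ^ 4 := by
      rw [← ENNReal.ofReal_pow hs0]
      congr 1
      have hsq : s ^ 2 = |d| := Real.sq_sqrt (abs_nonneg d)
      calc d ^ 2 = |d| ^ 2 := (sq_abs d).symm
        _ = (s ^ 2) ^ 2 := by rw [hsq]
        _ = s ^ 4 := by ring
    have h4 : w ^ 4 * ((ENNReal.ofReal s) ^ 4)⁻¹ ≤ G ^ 4 := by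
      have := pow_le_pow_left₀ zero_le hwle 4
      rw [ENNReal.inv_pow]
      rwa [mul_pow] at this
    have hinv : ((ENNReal.ofReal s) ^ 4)⁻¹ ≤ G ^ 4 * (w ^ 4)⁻¹ := by
      have hww : w ^ 4 * (w ^ 4)⁻¹ = 1 :=
        ENNReal.mul_inv_cancel (pow_ne_zero 4 hw0) (ENNReal.pow_ne_top hwtop)
      calc ((ENNReal.ofReal s) ^ 4)⁻¹
          = (w ^ 4 * ((ENNReal.ofReal s) ^ 4)⁻¹) * (w ^ 4)⁻¹ := by
            rw [mul_comm (w ^ 4), mul_assoc, hww, mul_one]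
        _ ≤ G ^ 4 * (w ^ 4)⁻¹ := mul_le_mul_left h4 _
    have hwpow : (w ^ 4)⁻¹ = ENNReal.ofReal (Real.exp (c * t)) := by
      have h4w : w ^ 4 = ENNReal.ofReal (Real.exp (-c * t)) := by
        rw [hw, ← ENNReal.ofReal_pow (Real.exp_pos _).le, ← Real.exp_nat_mul]
        congr 1
        push_cast
        ring
      rw [h4w, ← ENNReal.ofReal_inv_of_pos (Real.exp_pos _), ← Real.exp_neg]
      congr 1
      ring
    have hv : ENNReal.ofReal (‖v n.1‖) ^ 2
        ≤ ENNReal.ofReal (K * Real.exp (-c * t)) ^ 2 :=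
      pow_le_pow_left₀ zero_le (ENNReal.ofReal_le_ofReal (hdecay n.1)) 2
    have hE : ENNReal.ofReal (Real.exp (-c * t)) ^ 2 * ENNReal.ofReal (Real.exp (c * t))
        = ENNReal.ofReal (Real.exp (-c * t)) := by
      rw [← ENNReal.ofReal_pow (Real.exp_pos _).le,
        ← ENNReal.ofReal_mul (by positivity), ← Real.exp_nat_mul, ← Real.exp_add]
      congr 1
      push_cast
      ring
    calc ENNReal.ofReal (‖v n.1‖) ^ 2 / ENNReal.ofReal (d ^ 2)
        = ENNReal.ofReal (‖v n.1‖) ^ 2 * ((ENNReal.ofReal s) ^ 4)⁻¹ := by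
          rw [div_eq_mul_inv, hd2]
      _ ≤ ENNReal.ofReal (K * Real.exp (-c * t)) ^ 2
            * (G ^ 4 * ENNReal.ofReal (Real.exp (c * t))) :=
          mul_le_mul' hv (hwpow ▸ hinv)
      _ = (ENNReal.ofReal K) ^ 2 * G ^ 4 * ENNReal.ofReal (Real.exp (-c * t)) := by
          rw [ENNReal.ofReal_mul hK.le, mul_pow]
          calc (ENNReal.ofReal K) ^ 2 * ENNReal.ofReal (Real.exp (-c * t)) ^ 2
                * (G ^ 4 * ENNReal.ofReal (Real.exp (c * t)))
              = (ENNReal.ofReal K) ^ 2 * G ^ 4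
                  * (ENNReal.ofReal (Real.exp (-c * t)) ^ 2
                      * ENNReal.ofReal (Real.exp (c * t))) := by ring
            _ = (ENNReal.ofReal K) ^ 2 * G ^ 4 * ENNReal.ofReal (Real.exp (-c * t)) := by
                rw [hE]
  have hcsum : ∑' n : {n : Fin (m' + 1) → ℤ // n ≠ 0},
      ENNReal.ofReal (Real.exp (-c * normZ n.1)) < ⊤ :=
    lt_of_le_of_lt (ENNReal.tsum_comp_le_tsum_of_injective Subtype.val_injective
        (fun n => ENNReal.ofReal (Real.exp (-c * normZ n))))
      (traj_tsum_exp_lt_top (m' + 1) (by omega) hc)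
  calc ∑' n : {n : Fin (m' + 1) → ℤ // n ≠ 0},
      ENNReal.ofReal (‖v n.1‖) ^ 2 / ENNReal.ofReal (dotZ n.1 ω ^ 2)
      ≤ ∑' n : {n : Fin (m' + 1) → ℤ // n ≠ 0},
          (ENNReal.ofReal K) ^ 2 * G ^ 4 * ENNReal.ofReal (Real.exp (-c * normZ n.1)) :=
        ENNReal.tsum_le_tsum hterm
    _ = (ENNReal.ofReal K) ^ 2 * G ^ 4
          * ∑' n : {n : Fin (m' + 1) → ℤ // n ≠ 0},
              ENNReal.ofReal (Real.exp (-c * normZ n.1)) := ENNReal.tsum_mul_left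
    _ < ⊤ := ENNReal.mul_lt_top
        (ENNReal.mul_lt_top (ENNReal.pow_lt_top ENNReal.ofReal_lt_top)
          (ENNReal.pow_lt_top hG)) hcsum
end

section
/- Let m ≥ 2 and let (v_n)_{n ∈ ℤ^m \ {0}} be complex coefficients with v_n ≠ 0 for every n. Then the trajectory size Δ : ℝ^m → [0, +∞] is unbounded on every nonempty open subset of ℝ^m; consequently Δ is discontinuous at every point ω₀ at which Δ(ω₀) < ∞. -/
open MeasureTheory Filter Topology
open scoped ENNReal

lemma sum_two_aux {m : ℕ} (hm : 2 ≤ m) (f : Fin m → ℝ)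
    (hf : ∀ i : Fin m, i ≠ ⟨0, by omega⟩ → i ≠ ⟨1, by omega⟩ → f i = 0) :
    ∑ i, f i = f ⟨0, by omega⟩ + f ⟨1, by omega⟩ := by
  have h01 : (⟨0, by omega⟩ : Fin m) ≠ ⟨1, by omega⟩ := by simp [Fin.ext_iff]
  rw [← Finset.sum_pair h01]
  exact (Finset.sum_subset (Finset.subset_univ _) (by
    intro i _ hi
    simp only [Finset.mem_insert, Finset.mem_singleton, not_or] at hi
    exact hf i hi.1 hi.2)).symm

/-- Resonant points (admitting an integer relation) are dense. -/
lemma exists_resonant {m : ℕ} (hm : 2 ≤ m) (x : EuclideanSpace ℝ (Fin m)) {ε : ℝ}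
    (hε : 0 < ε) : ∃ ω : EuclideanSpace ℝ (Fin m), dist ω x < ε ∧
      ∃ n : Fin m → ℤ, n ≠ 0 ∧ dotZ n ω = 0 := by
  set i0 : Fin m := ⟨0, by omega⟩
  set i1 : Fin m := ⟨1, by omega⟩
  have hε2 : 0 < ε / 2 := by linarith
  obtain ⟨a₁, ha₁, ha₁'⟩ := exists_rat_btwn (by linarith : x i0 < x i0 + ε / 2)
  obtain ⟨a₂, ha₂, ha₂'⟩ := exists_rat_btwn ha₁'
  obtain ⟨a, ha0, ha, ha'⟩ : ∃ a : ℚ, a ≠ 0 ∧ x i0 < (a:ℝ) ∧ (a:ℝ) < x i0 + ε / 2 := by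
    rcases eq_or_ne a₁ 0 with h | h
    · refine ⟨a₂, ?_, lt_trans ha₁ ha₂, ha₂'⟩
      have : (a₁:ℝ) < a₂ := ha₂
      rw [h] at this; exact_mod_cast ne_of_gt (by exact_mod_cast this)
    · exact ⟨a₁, h, ha₁, lt_trans ha₂ ha₂'⟩
  obtain ⟨b, hb, hb'⟩ := exists_rat_btwn (by linarith : x i1 < x i1 + ε / 2)
  set ω : EuclideanSpace ℝ (Fin m) :=
    WithLp.toLp 2 (fun i => if i = i0 then (a:ℝ) else if i = i1 then (b:ℝ) else x i)
  have hω0 : ω i0 = (a:ℝ) := by simp [ω]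
  have hω1 : ω i1 = (b:ℝ) := by simp [ω, show i1 ≠ i0 by simp [i0, i1, Fin.ext_iff]]
  have hωi : ∀ i, i ≠ i0 → i ≠ i1 → ω i = x i := by intro i h0 h1; simp [ω, h0, h1]
  refine ⟨ω, ?_, ?_⟩
  · rw [EuclideanSpace.dist_eq]
    have hsum : ∑ i, dist (ω i) (x i) ^ 2
        = dist (ω i0) (x i0) ^ 2 + dist (ω i1) (x i1) ^ 2 := by
      apply sum_two_aux hm
      intro i h0 h1
      rw [hωi i h0 h1, dist_self]; ring
    rw [hsum]
    have h0 : dist (ω i0) (x i0) < ε / 2 := by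
      rw [hω0, Real.dist_eq, abs_sub_lt_iff]; constructor <;> linarith
    have h1 : dist (ω i1) (x i1) < ε / 2 := by
      rw [hω1, Real.dist_eq, abs_sub_lt_iff]; constructor <;> linarith
    have : dist (ω i0) (x i0) ^ 2 + dist (ω i1) (x i1) ^ 2 < ε ^ 2 := by
      have d0 := dist_nonneg (x := ω i0) (y := x i0)
      have d1 := dist_nonneg (x := ω i1) (y := x i1)
      nlinarith
    calc Real.sqrt (dist (ω i0) (x i0) ^ 2 + dist (ω i1) (x i1) ^ 2)
        < Real.sqrt (ε ^ 2) := by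
          apply Real.sqrt_lt_sqrt (by positivity) this
      _ = ε := Real.sqrt_sq hε.le
  · refine ⟨fun i => if i = i0 then b.num * a.den else if i = i1 then -(a.num * b.den) else 0,
      ?_, ?_⟩
    · intro hcon
      have h1 : -(a.num * b.den) = 0 := by
        simpa [show i1 ≠ i0 by simp [i0, i1, Fin.ext_iff]] using congrFun hcon i1
      rcases mul_eq_zero.mp (neg_eq_zero.mp h1) with h | h
      · exact ha0 (Rat.num_eq_zero.mp h)
      · exact b.den_nz (by exact_mod_cast h)
    · unfold dotZ
      have : ∑ i, ((if i = i0 then b.num * a.den else if i = i1 then -(a.num * b.den) else 0 : ℤ) : ℝ) * ω i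
          = ((b.num * a.den : ℤ) : ℝ) * ω i0 + ((-(a.num * b.den) : ℤ) : ℝ) * ω i1 := by
        have := sum_two_aux hm
          (fun i => ((if i = i0 then b.num * a.den else if i = i1 then -(a.num * b.den) else 0 : ℤ) : ℝ) * ω i)
          (by intro i h0 h1; simp [i0, i1, h0, h1])
        simpa [i0, i1, show i1 ≠ i0 by simp [i0, i1, Fin.ext_iff]] using this
      rw [this, hω0, hω1]
      push_cast
      rw [Rat.cast_def, Rat.cast_def]
      have had : (a.den : ℝ) ≠ 0 := by exact_mod_cast a.den_nz
      have hbd : (b.den : ℝ) ≠ 0 := by exact_mod_cast b.den_nz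
      field_simp
      ring

/-- At a resonant point with nonzero coefficient, the trajectory size is infinite. -/
lemma trajSize_eq_top {m : ℕ} (v : (Fin m → ℤ) → ℂ) (ω : EuclideanSpace ℝ (Fin m))
    (n : Fin m → ℤ) (hn : n ≠ 0) (hvn : v n ≠ 0) (hd : dotZ n ω = 0) :
    trajSize v ω = ⊤ := by
  unfold trajSize
  have hterm : (ENNReal.ofReal (‖v n‖)) ^ 2 / ENNReal.ofReal (dotZ n ω ^ 2) = ⊤ := by
    rw [hd]
    simp only [ne_eq, OfNat.ofNat_ne_zero, not_false_eq_true, zero_pow, ENNReal.ofReal_zero]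
    exact ENNReal.div_zero (pow_ne_zero 2
      (ne_of_gt (ENNReal.ofReal_pos.mpr (norm_pos_iff.mpr hvn))))
  have htsum : (∑' n : {n : Fin m → ℤ // n ≠ 0},
      (ENNReal.ofReal (‖v n.1‖)) ^ 2 / ENNReal.ofReal (dotZ n.1 ω ^ 2)) = ⊤ := by
    refine top_le_iff.mp ?_
    calc (⊤ : ℝ≥0∞) = _ := hterm.symm
      _ ≤ _ := ENNReal.le_tsum (⟨n, hn⟩ : {n : Fin m → ℤ // n ≠ 0})
  rw [htsum]
  exact ENNReal.top_rpow_of_pos (by norm_num)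

/-- If all Fourier coefficients are nonzero (m ≥ 2), the trajectory size Δ is unbounded on
every nonempty open subset of ℝ^m; consequently Δ is discontinuous at every point where it
is finite. -/
theorem trajSize_unbounded_on_open_and_discontinuous
    (m : ℕ) (hm : 2 ≤ m) (v : (Fin m → ℤ) → ℂ)
    (hv : ∀ n : Fin m → ℤ, n ≠ 0 → v n ≠ 0) :
    (∀ U : Set (EuclideanSpace ℝ (Fin m)), IsOpen U → U.Nonempty →
      ⨆ ω ∈ U, trajSize v ω = ⊤) ∧
    (∀ ω₀ : EuclideanSpace ℝ (Fin m), trajSize v ω₀ < ⊤ →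
      ¬ ContinuousAt (trajSize v) ω₀) := by
  have h1 : ∀ U : Set (EuclideanSpace ℝ (Fin m)), IsOpen U → U.Nonempty →
      ⨆ ω ∈ U, trajSize v ω = ⊤ := by
    intro U hU ⟨x, hx⟩
    obtain ⟨ε, hε, hball⟩ := Metric.isOpen_iff.mp hU x hx
    obtain ⟨ω, hωd, n, hn, hdot⟩ := exists_resonant hm x hε
    have hωU : ω ∈ U := hball hωd
    refine top_le_iff.mp ?_
    calc (⊤ : ℝ≥0∞) = trajSize v ω := (trajSize_eq_top v ω n hn (hv n hn) hdot).symm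
      _ ≤ ⨆ ω ∈ U, trajSize v ω := le_iSup₂ (f := fun ω _ => trajSize v ω) ω hωU
  refine ⟨h1, ?_⟩
  intro ω₀ hfin hcont
  have hmem : trajSize v ⁻¹' (Set.Iio (trajSize v ω₀ + 1)) ∈ 𝓝 ω₀ :=
    hcont (isOpen_Iio.mem_nhds (ENNReal.lt_add_right hfin.ne one_ne_zero))
  obtain ⟨U, hUsub, hUopen, hωU⟩ := mem_nhds_iff.mp hmem
  have htop := h1 U hUopen ⟨ω₀, hωU⟩
  have hle : ⨆ ω ∈ U, trajSize v ω ≤ trajSize v ω₀ + 1 :=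
    iSup₂_le fun ω hω => le_of_lt (hUsub hω)
  rw [htop] at hle
  exact absurd (top_le_iff.mp hle)
    (ne_of_lt (ENNReal.add_lt_top.mpr ⟨hfin, ENNReal.one_lt_top⟩))
end

section
/- Let m ≥ 1 and τ > m − 1. Then the set of ω ∈ ℝ^m for which there exists a constant C > 0 such that |n·ω| ≥ C ‖n‖^{−τ} for every n ∈ ℤ^m \ {0} has full Lebesgue measure (its complement is Lebesgue-null). -/
open MeasureTheory Filter Topology
open scoped ENNReal

section Aux

lemma dioph_intSum (r : ℝ) (hr : 1 < r) :
    ∑' k : ℤ, ENNReal.ofReal ((1 + |(k : ℝ)|) ^ (-r)) ≠ ∞ := by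
  have h1 : Summable (fun n : ℕ => ((n : ℝ) + 1) ^ (-r)) := by
    have h := (Real.summable_nat_rpow (p := -r)).2 (by linarith)
    have := (summable_nat_add_iff (f := fun n : ℕ => (n : ℝ) ^ (-r)) 1).2 h
    exact this.congr (by intro n; push_cast; ring_nf)
  have hs : Summable (fun k : ℤ => (1 + |(k : ℝ)|) ^ (-r)) := by
    apply Summable.of_nat_of_neg
    · exact h1.congr (by intro n; simp [abs_of_nonneg, add_comm])
    · exact h1.congr (by intro n; simp [abs_of_nonneg, add_comm])
  rw [← ENNReal.ofReal_tsum_of_nonneg (fun k => Real.rpow_nonneg (by positivity) _) hs]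
  exact ENNReal.ofReal_ne_top

lemma dioph_piSum (r : ℝ) (hr : 1 < r) :
    ∀ m : ℕ, ∑' n : Fin m → ℤ, ENNReal.ofReal (∏ i, (1 + |(n i : ℝ)|) ^ (-r)) ≠ ∞ := by
  intro m
  induction m with
  | zero =>
      have : ∀ n : Fin 0 → ℤ, ENNReal.ofReal (∏ i, (1 + |(n i : ℝ)|) ^ (-r)) = 1 := by
        intro n; simp
      rw [tsum_congr this, tsum_fintype]
      simp
  | succ m ih =>
      have key : ∑' n : Fin (m+1) → ℤ, ENNReal.ofReal (∏ i, (1 + |(n i : ℝ)|) ^ (-r))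
          = (∑' k : ℤ, ENNReal.ofReal ((1 + |(k : ℝ)|) ^ (-r))) *
            ∑' n : Fin m → ℤ, ENNReal.ofReal (∏ i, (1 + |(n i : ℝ)|) ^ (-r)) := by
        rw [← Equiv.tsum_eq (Fin.consEquiv fun _ : Fin (m+1) => ℤ)]
        have : ∀ p : ℤ × (Fin m → ℤ),
            ENNReal.ofReal (∏ i, (1 + |(((Fin.consEquiv fun _ : Fin (m+1) => ℤ) p) i : ℝ)|) ^ (-r))
            = ENNReal.ofReal ((1 + |(p.1 : ℝ)|) ^ (-r)) *
              ENNReal.ofReal (∏ i, (1 + |(p.2 i : ℝ)|) ^ (-r)) := by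
          intro p
          rw [← ENNReal.ofReal_mul (Real.rpow_nonneg (by positivity) _)]
          congr 1
          rw [Fin.prod_univ_succ]
          simp [Fin.consEquiv]
        rw [tsum_congr this, ENNReal.tsum_prod']
        simp only []
        rw [tsum_congr (fun a : ℤ =>
          ENNReal.tsum_mul_left (a := ENNReal.ofReal ((1 + |(a:ℝ)|) ^ (-r))))]
        exact ENNReal.tsum_mul_right
      rw [key]
      exact ENNReal.mul_ne_top (dioph_intSum r hr) ih

lemma dioph_slab (m : ℕ) (n : Fin m → ℤ) (i0 : Fin m) (h0 : n i0 ≠ 0) (δ R : ℝ) :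
    volume {x : Fin m → ℝ | |∑ i, (n i : ℝ) * x i| ≤ δ ∧ ∀ i, |x i| ≤ R}
      ≤ ENNReal.ofReal (2 * δ / |(n i0 : ℝ)|) * ENNReal.ofReal (2 * R) ^ (m - 1) := by
  classical
  set S : Set (Fin m → ℝ) := {x | |∑ i, (n i : ℝ) * x i| ≤ δ ∧ ∀ i, |x i| ≤ R} with hS
  set T : (Fin m → ℝ) →ₗ[ℝ] (Fin m → ℝ) :=
    LinearMap.pi (fun i => if i = i0 then (∑ j, (n j : ℝ) • LinearMap.proj j) else LinearMap.proj i)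
    with hT
  have hTapp : ∀ (x : Fin m → ℝ) (i : Fin m),
      T x i = if i = i0 then ∑ j, (n j : ℝ) * x j else x i := by
    intro x i
    simp only [hT, LinearMap.pi_apply]
    split_ifs with h
    · simp [LinearMap.sum_apply]
    · simp
  have hdet : LinearMap.det T = (n i0 : ℝ) := by
    have hM : LinearMap.toMatrix (Pi.basisFun ℝ (Fin m)) (Pi.basisFun ℝ (Fin m)) T
        = (1 : Matrix (Fin m) (Fin m) ℝ).updateRow i0 (fun j => (n j : ℝ)) := by
      ext i j
      rw [LinearMap.toMatrix_apply]
      simp only [Pi.basisFun_apply, Pi.basisFun_repr]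
      rw [hTapp]
      by_cases h : i = i0
      · subst h
        simp [Matrix.updateRow_self, Pi.single_apply, mul_ite, Finset.sum_ite_eq]
      · simp [Matrix.updateRow_apply, h, Ne.symm h, Pi.single_apply, Matrix.one_apply, eq_comm]
    rw [← LinearMap.det_toMatrix (Pi.basisFun ℝ (Fin m)), hM]
    rw [← Matrix.det_transpose, ← Matrix.updateCol_transpose, Matrix.transpose_one]
    rw [← Matrix.cramer_apply, Matrix.cramer_one]
    simp
  have habs : (1 : ℝ) ≤ |(n i0 : ℝ)| := by
    rw [← Int.cast_abs]
    exact_mod_cast Int.one_le_abs h0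
  have hpos : (0 : ℝ) < |(n i0 : ℝ)| := lt_of_lt_of_le one_pos habs
  set B : Set (Fin m → ℝ) :=
    Set.pi Set.univ (fun i => Set.Icc (if i = i0 then -δ else -R) (if i = i0 then δ else R)) with hB
  have hsub : T '' S ⊆ B := by
    rintro _ ⟨x, ⟨hx1, hx2⟩, rfl⟩
    intro i _
    rw [hTapp]
    by_cases h : i = i0
    · simp only [if_pos h]; exact Set.mem_Icc.2 (abs_le.1 hx1)
    · simp only [if_neg h]; exact Set.mem_Icc.2 (abs_le.1 (hx2 i))
  have hBvol : volume B = ENNReal.ofReal (2 * δ) * ENNReal.ofReal (2 * R) ^ (m - 1) := by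
    rw [hB, volume_pi_pi]
    have : ∀ i : Fin m, volume (Set.Icc (if i = i0 then -δ else -R) (if i = i0 then δ else R))
        = if i = i0 then ENNReal.ofReal (2 * δ) else ENNReal.ofReal (2 * R) := by
      intro i; split_ifs <;> simp [Real.volume_Icc] <;> ring_nf <;> rw [ENNReal.ofReal_mul' (by norm_num)] <;> norm_num
    rw [Finset.prod_congr rfl (fun i _ => this i)]
    rw [← Finset.mul_prod_erase Finset.univ _ (Finset.mem_univ i0), if_pos rfl]
    congr 1
    rw [Finset.prod_congr rfl (fun i hi => if_neg (Finset.ne_of_mem_erase hi))]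
    rw [Finset.prod_const, Finset.card_erase_of_mem (Finset.mem_univ i0), Finset.card_univ,
      Fintype.card_fin]
  have himg := Measure.addHaar_image_linearMap (volume : Measure (Fin m → ℝ)) T S
  rw [hdet] at himg
  have hle : ENNReal.ofReal |(n i0 : ℝ)| * volume S
      ≤ ENNReal.ofReal (2 * δ) * ENNReal.ofReal (2 * R) ^ (m - 1) := by
    rw [← himg, ← hBvol]
    exact measure_mono hsub
  have hne0 : ENNReal.ofReal |(n i0 : ℝ)| ≠ 0 := (ENNReal.ofReal_pos.2 hpos).ne'
  have hnetop : ENNReal.ofReal |(n i0 : ℝ)| ≠ ∞ := ENNReal.ofReal_ne_top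
  have : volume S ≤ (ENNReal.ofReal (2 * δ) * ENNReal.ofReal (2 * R) ^ (m - 1))
      / ENNReal.ofReal |(n i0 : ℝ)| := by
    rw [ENNReal.le_div_iff_mul_le (Or.inl hne0) (Or.inl hnetop), mul_comm]
    exact hle
  refine this.trans (le_of_eq ?_)
  rw [ENNReal.ofReal_div_of_pos hpos]
  rw [ENNReal.div_eq_inv_mul, ENNReal.div_eq_inv_mul]
  ring

lemma dioph_chain (m : ℕ) (hm : 1 ≤ m) (τ : ℝ) (hτ : (m:ℝ) - 1 < τ) (n : Fin m → ℤ)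
    (i0 : Fin m) (h0 : n i0 ≠ 0) (hmax : ∀ i, |(n i : ℝ)| ≤ |(n i0 : ℝ)|) :
    Real.sqrt (∑ i, ((n i : ℝ)) ^ 2) ^ (-τ) / |(n i0 : ℝ)|
      ≤ 2 ^ (τ+1) * ∏ i, (1 + |(n i : ℝ)|) ^ (-((τ+1)/(m:ℝ))) := by
  have hm0 : (0:ℝ) < m := by exact_mod_cast Nat.lt_of_lt_of_le Nat.zero_lt_one hm
  have hm1 : (1:ℝ) ≤ (m:ℝ) := by exact_mod_cast hm
  have hτ0 : 0 ≤ τ := by linarith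
  have hτ1 : (0:ℝ) < τ + 1 := by linarith
  have habs : (1 : ℝ) ≤ |(n i0 : ℝ)| := by
    rw [← Int.cast_abs]; exact_mod_cast Int.one_le_abs h0
  have hpos : (0 : ℝ) < |(n i0 : ℝ)| := lt_of_lt_of_le one_pos habs
  have hnorm_ge : |(n i0:ℝ)| ≤ Real.sqrt (∑ i, ((n i : ℝ)) ^ 2) := by
    have h : ((n i0:ℝ))^2 ≤ ∑ i, (n i:ℝ)^2 :=
      Finset.single_le_sum (f := fun i => ((n i:ℝ))^2) (fun i _ => sq_nonneg _)
        (Finset.mem_univ i0)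
    calc |(n i0:ℝ)| = Real.sqrt (((n i0:ℝ))^2) := (Real.sqrt_sq_eq_abs _).symm
      _ ≤ _ := Real.sqrt_le_sqrt h
  have step1 : Real.sqrt (∑ i, ((n i : ℝ)) ^ 2) ^ (-τ) / |(n i0 : ℝ)|
      ≤ |(n i0:ℝ)| ^ (-(τ+1)) := by
    have h1 : Real.sqrt (∑ i, ((n i : ℝ)) ^ 2) ^ (-τ) ≤ |(n i0:ℝ)| ^ (-τ) :=
      Real.rpow_le_rpow_of_nonpos hpos hnorm_ge (neg_nonpos.2 hτ0)
    have h2 : |(n i0:ℝ)| ^ (-τ) / |(n i0 : ℝ)| = |(n i0:ℝ)| ^ (-(τ+1)) := by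
      rw [div_eq_mul_inv, ← Real.rpow_neg_one |(n i0:ℝ)|, ← Real.rpow_add hpos]
      ring_nf
    rw [← h2]
    gcongr
  refine step1.trans ?_
  have hfac : ∀ i : Fin m, (0:ℝ) < 1 + |(n i : ℝ)| := fun i => by positivity
  have hprodpos : (0:ℝ) < ∏ i, (1 + |(n i : ℝ)|) := Finset.prod_pos (fun i _ => hfac i)
  have hprod_le : ∏ i, (1 + |(n i:ℝ)|) ≤ (2*|(n i0:ℝ)|)^m := by
    calc ∏ i, (1 + |(n i:ℝ)|) ≤ ∏ _i : Fin m, (2*|(n i0:ℝ)|) := by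
          apply Finset.prod_le_prod (fun i _ => le_of_lt (hfac i))
          intro i _
          have := hmax i
          linarith
      _ = (2*|(n i0:ℝ)|)^m := by rw [Finset.prod_const, Finset.card_univ, Fintype.card_fin]
  have hrw : ∏ i, (1 + |(n i : ℝ)|) ^ (-((τ+1)/(m:ℝ)))
      = (∏ i, (1 + |(n i : ℝ)|)) ^ (-((τ+1)/(m:ℝ))) := by
    rw [← Real.finset_prod_rpow _ _ (fun i _ => le_of_lt (hfac i))]
  rw [hrw]
  have key : ((2*|(n i0:ℝ)|)^m) ^ (-((τ+1)/(m:ℝ)))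
      ≤ (∏ i, (1 + |(n i : ℝ)|)) ^ (-((τ+1)/(m:ℝ))) :=
    Real.rpow_le_rpow_of_nonpos hprodpos hprod_le (neg_nonpos.2 (div_nonneg hτ1.le hm0.le))
  have keq : ((2*|(n i0:ℝ)|)^m : ℝ) ^ (-((τ+1)/(m:ℝ)))
      = 2 ^ (-(τ+1)) * |(n i0:ℝ)| ^ (-(τ+1)) := by
    rw [← Real.rpow_natCast (2*|(n i0:ℝ)|) m, ← Real.rpow_mul (by positivity)]
    have : (m:ℝ) * (-((τ+1)/(m:ℝ))) = -(τ+1) := by field_simp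
    rw [this, Real.mul_rpow (by norm_num) (le_of_lt hpos)]
  have h2p : (2:ℝ) ^ (τ+1) * 2 ^ (-(τ+1)) = 1 := by
    rw [← Real.rpow_add (by norm_num : (0:ℝ) < 2)]
    ring_nf
    simp
  calc |(n i0:ℝ)| ^ (-(τ+1)) = 2 ^ (τ+1) * (2 ^ (-(τ+1)) * |(n i0:ℝ)| ^ (-(τ+1))) := by
        rw [← mul_assoc, h2p, one_mul]
    _ = 2 ^ (τ+1) * ((2*|(n i0:ℝ)|)^m) ^ (-((τ+1)/(m:ℝ))) := by rw [keq]
    _ ≤ 2 ^ (τ+1) * (∏ i, (1 + |(n i : ℝ)|)) ^ (-((τ+1)/(m:ℝ))) := by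
        apply mul_le_mul_of_nonneg_left key (by positivity)

end Aux

set_option maxHeartbeats 2000000 in
/-- Diophantine vectors have full measure: for τ > m − 1, almost every ω ∈ ℝ^m admits a
constant C > 0 with |n·ω| ≥ C‖n‖^{−τ} for all nonzero integer vectors n. -/
theorem diophantine_full_measure
    (m : ℕ) (hm : 1 ≤ m) (τ : ℝ) (hτ : (m : ℝ) - 1 < τ) :
    ∀ᵐ ω : EuclideanSpace ℝ (Fin m) ∂volume,
      ∃ C : ℝ, 0 < C ∧ ∀ n : Fin m → ℤ, n ≠ 0 → C * normZ n ^ (-τ) ≤ |dotZ n ω| := by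
  classical
  have hm0 : (0:ℝ) < m := by exact_mod_cast Nat.lt_of_lt_of_le Nat.zero_lt_one hm
  set r : ℝ := (τ+1)/(m:ℝ) with hrdef
  have hr : 1 < r := by
    rw [hrdef, lt_div_iff₀ hm0]
    linarith
  rw [ae_iff]
  set Bad : Set (EuclideanSpace ℝ (Fin m)) :=
    {ω | ¬∃ C : ℝ, 0 < C ∧ ∀ n : Fin m → ℤ, n ≠ 0 → C * normZ n ^ (-τ) ≤ |dotZ n ω|} with hBad
  have hcov : Bad ⊆ ⋃ R : ℕ, (Bad ∩ {ω | ∀ i, |ω i| ≤ (R:ℝ)}) := by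
    intro ω hω
    rw [Set.mem_iUnion]
    refine ⟨⌈∑ i, |ω i|⌉₊, hω, fun i => ?_⟩
    calc |ω i| ≤ ∑ i, |ω i| :=
          Finset.single_le_sum (f := fun i => |ω i|) (fun i _ => abs_nonneg _)
            (Finset.mem_univ i)
      _ ≤ _ := Nat.le_ceil _
  apply measure_mono_null hcov
  apply measure_iUnion_null
  intro R
  -- fixed radius R
  set Stot : ℝ≥0∞ := ∑' n : Fin m → ℤ, ENNReal.ofReal (∏ i, (1 + |(n i : ℝ)|) ^ (-r))
    with hStotdef
  have hStot : Stot ≠ ∞ := dioph_piSum r hr m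
  set c : ℝ := 2 * 2 ^ (τ+1) * (2*(R:ℝ)) ^ (m-1) with hcdef
  have hc : 0 ≤ c := by positivity
  -- the bound for each j
  have hbound : ∀ j : ℕ, volume (Bad ∩ {ω | ∀ i, |ω i| ≤ (R:ℝ)})
      ≤ ENNReal.ofReal (((j:ℝ)+1)⁻¹ * c) * Stot := by
    intro j
    set Cj : ℝ := ((j:ℝ)+1)⁻¹ with hCjdef
    have hCj : 0 < Cj := by positivity
    -- the union over n
    set A : {n : Fin m → ℤ // n ≠ 0} → Set (EuclideanSpace ℝ (Fin m)) :=
      fun n => {ω | |dotZ n.1 ω| ≤ Cj * normZ n.1 ^ (-τ) ∧ ∀ i, |ω i| ≤ (R:ℝ)} with hAdef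
    have hsub : Bad ∩ {ω | ∀ i, |ω i| ≤ (R:ℝ)} ⊆ ⋃ n, A n := by
      rintro ω ⟨hω, hbox⟩
      rw [hBad, Set.mem_setOf_eq] at hω
      push_neg at hω
      obtain ⟨n, hn0, hlt⟩ := hω Cj hCj
      rw [Set.mem_iUnion]
      exact ⟨⟨n, hn0⟩, le_of_lt hlt, hbox⟩
    refine le_trans (measure_mono hsub) (le_trans (measure_iUnion_le A) ?_)
    -- bound each term
    have hterm : ∀ n : {n : Fin m → ℤ // n ≠ 0},
        volume (A n) ≤ ENNReal.ofReal (Cj * c) *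
          ENNReal.ofReal (∏ i, (1 + |(n.1 i : ℝ)|) ^ (-r)) := by
      rintro ⟨n, hn0⟩
      -- choose max coordinate
      obtain ⟨i0, -, hmax⟩ := Finset.exists_max_image Finset.univ (fun i => |(n i : ℝ)|)
        ⟨⟨0, Nat.lt_of_lt_of_le Nat.zero_lt_one hm⟩, Finset.mem_univ _⟩
      have hmax' : ∀ i, |(n i : ℝ)| ≤ |(n i0 : ℝ)| := fun i => hmax i (Finset.mem_univ i)
      have h00 : n i0 ≠ 0 := by
        obtain ⟨k, hk⟩ := Function.ne_iff.1 hn0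
        intro h
        apply hk
        have := hmax' k
        rw [h] at this
        simp only [Int.cast_zero, abs_zero] at this
        have : |(n k : ℝ)| = 0 := le_antisymm this (abs_nonneg _)
        exact_mod_cast abs_eq_zero.1 this
      set δ : ℝ := Cj * normZ n ^ (-τ) with hδdef
      -- transfer to pi space
      set S : Set (Fin m → ℝ) := {x | |∑ i, (n i : ℝ) * x i| ≤ δ ∧ ∀ i, |x i| ≤ (R:ℝ)}
        with hSdef
      have hSmeas : MeasurableSet S := by
        apply MeasurableSet.inter
        · have hf : Measurable fun x : Fin m → ℝ => |∑ i, (n i:ℝ) * x i| :=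
            (Finset.measurable_sum _ (fun i _ => (measurable_pi_apply i).const_mul _)).abs
          exact measurableSet_le hf measurable_const
        · show MeasurableSet {x : Fin m → ℝ | ∀ i, |x i| ≤ (R:ℝ)}
          rw [Set.setOf_forall]
          exact MeasurableSet.iInter
            (fun i => measurableSet_le (measurable_pi_apply i).abs measurable_const)
      have htrans : volume (A ⟨n, hn0⟩) = volume S := by
        have := (EuclideanSpace.volume_preserving_symm_measurableEquiv_toLp (Fin m)).measure_preimage
          hSmeas.nullMeasurableSet
        convert this using 2
        rfl
      have hslab := dioph_slab m n i0 h00 δ (R:ℝ)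
      rw [htrans]
      refine le_trans hslab ?_
      -- numeric bound
      have hnormpos : 0 < normZ n := by
        rw [normZ]
        have : (0:ℝ) < ((n i0:ℝ))^2 := by
          have : (n i0 : ℝ) ≠ 0 := by exact_mod_cast h00
          positivity
        apply Real.sqrt_pos.2
        calc (0:ℝ) < ((n i0:ℝ))^2 := this
          _ ≤ ∑ i, (n i:ℝ)^2 :=
            Finset.single_le_sum (f := fun i => ((n i:ℝ))^2) (fun i _ => sq_nonneg _)
              (Finset.mem_univ i0)
      have hchain := dioph_chain m hm τ hτ n i0 h00 hmax'
      have hreal : 2 * δ / |(n i0 : ℝ)| ≤ Cj * 2 * (2 ^ (τ+1) *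
          ∏ i, (1 + |(n i : ℝ)|) ^ (-r)) := by
        rw [hδdef]
        have habs : (1 : ℝ) ≤ |(n i0 : ℝ)| := by
          rw [← Int.cast_abs]; exact_mod_cast Int.one_le_abs h00
        have hpos : (0 : ℝ) < |(n i0 : ℝ)| := lt_of_lt_of_le one_pos habs
        have : 2 * (Cj * normZ n ^ (-τ)) / |(n i0:ℝ)|
            = Cj * 2 * (normZ n ^ (-τ) / |(n i0:ℝ)|) := by ring
        rw [this]
        have hch : normZ n ^ (-τ) / |(n i0:ℝ)|
            ≤ 2 ^ (τ+1) * ∏ i, (1 + |(n i : ℝ)|) ^ (-r) := by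
          rw [normZ, hrdef]
          exact hchain
        apply mul_le_mul_of_nonneg_left hch (by positivity)
      calc ENNReal.ofReal (2 * δ / |(n i0 : ℝ)|) * ENNReal.ofReal (2 * (R:ℝ)) ^ (m - 1)
          ≤ ENNReal.ofReal (Cj * 2 * (2 ^ (τ+1) * ∏ i, (1 + |(n i : ℝ)|) ^ (-r))) *
            ENNReal.ofReal ((2 * (R:ℝ)) ^ (m-1)) := by
            rw [← ENNReal.ofReal_pow (by positivity)]
            exact mul_le_mul_left (ENNReal.ofReal_le_ofReal hreal) _
        _ = ENNReal.ofReal (Cj * c) * ENNReal.ofReal (∏ i, (1 + |(n i : ℝ)|) ^ (-r)) := by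
            rw [← ENNReal.ofReal_mul (by positivity), ← ENNReal.ofReal_mul (by positivity)]
            congr 1
            rw [hcdef]
            ring
    refine le_trans (ENNReal.tsum_le_tsum hterm) ?_
    rw [ENNReal.tsum_mul_left]
    rw [hCjdef]
    apply mul_le_mul_right
    -- subtype sum ≤ full sum
    rw [hStotdef]
    exact ENNReal.tsum_comp_le_tsum_of_injective Subtype.val_injective
      (fun n : Fin m → ℤ => ENNReal.ofReal (∏ i, (1 + |(n i : ℝ)|) ^ (-r)))
  -- conclude by letting j → ∞
  have hlim : Tendsto (fun j : ℕ => ENNReal.ofReal (((j:ℝ)+1)⁻¹ * c) * Stot) atTop (𝓝 0) := by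
    have h1 : Tendsto (fun j : ℕ => ((j:ℝ)+1)⁻¹ * c) atTop (𝓝 0) := by
      have h2 := tendsto_one_div_add_atTop_nhds_zero_nat.mul_const c
      simpa [one_div] using h2
    have h3 : Tendsto (fun j : ℕ => ENNReal.ofReal (((j:ℝ)+1)⁻¹ * c)) atTop (𝓝 0) := by
      have := ENNReal.tendsto_ofReal h1
      simpa using this
    have := ENNReal.Tendsto.mul_const h3 (Or.inr hStot)
    simpa using this
  have hle : volume (Bad ∩ {ω | ∀ i, |ω i| ≤ (R:ℝ)}) ≤ 0 := ge_of_tendsto' hlim hbound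
  exact le_antisymm hle (zero_le)
end

section
/- For every real number α, the improper Lebesgue integral ∫_{−∞}^{∞} (1 − cos(α z)) / z² dz equals π |α|. -/
open MeasureTheory Set Real Filter Topology
open scoped ENNReal

namespace OneSubCosAux

lemma integrable_exp_neg_mul {t : ℝ} (ht : 0 < t) :
    IntegrableOn (fun z : ℝ => Real.exp (-(t * z))) (Ioi (0:ℝ)) := by
  simpa [neg_mul] using exp_neg_integrableOn_Ioi (0:ℝ) ht

lemma integral_exp_neg_mul {t : ℝ} (ht : 0 < t) :
    ∫ z in Ioi (0:ℝ), Real.exp (-(t * z)) = 1 / t := by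
  have h := integral_comp_mul_left_Ioi (fun x : ℝ => Real.exp (-x)) 0 ht
  simp only [mul_zero, integral_exp_neg_Ioi_zero, smul_eq_mul, mul_one] at h
  rw [h, one_div]

lemma integrable_exp_cos {t : ℝ} (ht : 0 < t) (a : ℝ) :
    IntegrableOn (fun z : ℝ => Real.exp (-(t * z)) * Real.cos (a * z)) (Ioi (0:ℝ)) := by
  refine Integrable.mono (integrable_exp_neg_mul ht) ?_ ?_
  · exact (Real.continuous_exp.comp (continuous_const.mul continuous_id).neg |>.mul
      (Real.continuous_cos.comp (continuous_const.mul continuous_id))).aestronglyMeasurable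
  · refine ae_of_all _ fun z => ?_
    simp only [norm_mul, Real.norm_eq_abs, Real.abs_exp]
    nlinarith [Real.abs_cos_le_one (a * z), Real.exp_pos (-(t * z)),
      abs_nonneg (Real.cos (a * z))]

lemma laplace_cos {t : ℝ} (ht : 0 < t) (a : ℝ) :
    ∫ z in Ioi (0:ℝ), Real.exp (-(t * z)) * Real.cos (a * z) = t / (t ^ 2 + a ^ 2) := by
  set c : ℂ := -t + a * Complex.I with hc
  have hcre : c.re = -t := by simp [hc]
  have hcim : c.im = a := by simp [hc]
  have hcne : c ≠ 0 := fun h => by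
    have := congrArg Complex.re h
    rw [hcre] at this
    simp at this; exact ht.ne' this
  have hre : ∀ z : ℝ, (Complex.exp (c * z)).re = Real.exp (-(t * z)) * Real.cos (a * z) := by
    intro z
    rw [Complex.exp_re]
    congr 1
    · congr 1; simp [Complex.mul_re, hcre, hcim]
    · congr 1; simp [Complex.mul_im, hcre, hcim]
  have hI : ∀ b : ℝ, (∫ z in (0:ℝ)..b, Real.exp (-(t * z)) * Real.cos (a * z))
      = ((Complex.exp (c * b) - 1) / c).re := by
    intro b
    have hint : IntervalIntegrable (fun z : ℝ => Complex.exp (c * z)) volume 0 b :=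
      (Complex.continuous_exp.comp (continuous_const.mul Complex.continuous_ofReal)).intervalIntegrable _ _
    have h1 : (∫ z in (0:ℝ)..b, Real.exp (-(t * z)) * Real.cos (a * z))
        = ∫ z in (0:ℝ)..b, (Complex.exp (c * z)).re := by
      simp_rw [hre]
    have h2 := ContinuousLinearMap.intervalIntegral_comp_comm Complex.reCLM hint
    simp only [Complex.reCLM_apply] at h2
    rw [h1, h2, integral_exp_mul_complex hcne]
    norm_num
  have hfi : IntegrableOn (fun z : ℝ => Real.exp (-(t * z)) * Real.cos (a * z)) (Ioi 0) :=
    integrable_exp_cos ht a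
  have h1 := intervalIntegral_tendsto_integral_Ioi 0 hfi tendsto_id
  have hz : Tendsto (fun b : ℝ => Complex.exp (c * b)) atTop (𝓝 0) := by
    rw [tendsto_zero_iff_norm_tendsto_zero]
    have : ∀ b : ℝ, ‖Complex.exp (c * b)‖ = Real.exp (-(t * b)) := by
      intro b
      rw [Complex.norm_exp]
      congr 1
      simp [Complex.mul_re, hcre, hcim]
    simp_rw [this]
    exact Real.tendsto_exp_atBot.comp
      (tendsto_neg_atBot_iff.2 (tendsto_id.const_mul_atTop ht))
  have h2 : Tendsto (fun b : ℝ => ((Complex.exp (c * b) - 1) / c).re) atTop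
      (𝓝 (((0:ℂ) - 1) / c).re) :=
    (Complex.continuous_re.tendsto _).comp ((hz.sub_const 1).div_const c)
  have h3 : Tendsto (fun b : ℝ => (∫ z in (0:ℝ)..b, Real.exp (-(t * z)) * Real.cos (a * z)))
      atTop (𝓝 (((0:ℂ) - 1) / c).re) := by
    simp_rw [hI]; exact h2
  have := tendsto_nhds_unique h1 h3
  rw [this]
  have hnormSq : Complex.normSq c = t ^ 2 + a ^ 2 := by
    simp [Complex.normSq_apply, hcre, hcim]; ring
  rw [Complex.div_re, hnormSq]
  simp [hcre, hcim]

lemma integrable_mul_exp {z : ℝ} (hz : 0 < z) :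
    IntegrableOn (fun t : ℝ => t * Real.exp (-(z * t))) (Ioi (0:ℝ)) := by
  have hbase : IntegrableOn (fun x : ℝ => Real.exp (-x) * x) (Ioi (0:ℝ)) := by
    have := Real.GammaIntegral_convergent (s := 2) two_pos
    refine this.congr (ae_of_all _ fun x => ?_)
    norm_num
  have h := (integrableOn_Ioi_comp_mul_left_iff (fun x : ℝ => Real.exp (-x) * x) 0 hz).2
    (by simpa using hbase)
  refine (h.const_mul z⁻¹).congr (ae_of_all _ fun t => ?_)
  field_simp

lemma integral_mul_exp {z : ℝ} (hz : 0 < z) :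
    ∫ t in Ioi (0:ℝ), t * Real.exp (-(z * t)) = 1 / z ^ 2 := by
  have hgamma : ∫ x in Ioi (0:ℝ), Real.exp (-x) * x = 1 := by
    have h := Real.Gamma_eq_integral (s := (2:ℝ)) two_pos
    rw [Real.Gamma_two] at h
    simp only [show (2:ℝ) - 1 = 1 by norm_num, Real.rpow_one] at h
    exact h.symm
  have h2 := integral_comp_mul_left_Ioi (fun x : ℝ => Real.exp (-x) * x) 0 hz
  simp only [mul_zero, hgamma, smul_eq_mul, mul_one] at h2
  have h3 : ∀ t : ℝ, Real.exp (-(z * t)) * (z * t) = z * (t * Real.exp (-(z * t))) :=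
    fun t => by ring
  simp_rw [h3, integral_const_mul] at h2
  have hzne : (z:ℝ) ≠ 0 := hz.ne'
  rw [eq_div_iff (by positivity : (z:ℝ)^2 ≠ 0)]
  have : z * (z * ∫ (a : ℝ) in Ioi 0, a * rexp (-(z * a))) = z * z⁻¹ := by rw [h2]
  rw [mul_inv_cancel₀ hzne] at this
  nlinarith [this]

lemma integrable_ratio {a : ℝ} (ha : 0 < a) :
    IntegrableOn (fun t : ℝ => a ^ 2 / (t ^ 2 + a ^ 2)) (Ioi (0:ℝ)) := by
  have h2 : Integrable (fun t : ℝ => (1 + (a⁻¹ * t) ^ 2)⁻¹) :=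
    integrable_inv_one_add_sq.comp_mul_left' (inv_ne_zero ha.ne')
  refine (h2.congr (ae_of_all _ fun t => ?_)).integrableOn
  have hane : a ≠ 0 := ha.ne'
  field_simp
  ring

lemma integral_ratio {a : ℝ} (ha : 0 < a) :
    ∫ t in Ioi (0:ℝ), a ^ 2 / (t ^ 2 + a ^ 2) = a * π / 2 := by
  have h := integral_comp_mul_left_Ioi (fun s : ℝ => (1 + s ^ 2)⁻¹) 0 (inv_pos.2 ha)
  rw [mul_zero, integral_Ioi_inv_one_add_sq] at h
  have hane : a ≠ 0 := ha.ne'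
  have heq : ∀ t : ℝ, (1 + (a⁻¹ * t) ^ 2)⁻¹ = a ^ 2 / (t ^ 2 + a ^ 2) := by
    intro t; field_simp; ring
  simp_rw [heq] at h
  rw [h, Real.arctan_zero, inv_inv, smul_eq_mul]
  ring

lemma integral_Ioi_main {a : ℝ} (ha : 0 < a) :
    IntegrableOn (fun z : ℝ => (1 - Real.cos (a * z)) / z ^ 2) (Ioi (0:ℝ)) ∧
    ∫ z in Ioi (0:ℝ), (1 - Real.cos (a * z)) / z ^ 2 = a * π / 2 := by
  set f : ℝ → ℝ := fun z => (1 - Real.cos (a * z)) / z ^ 2 with hf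
  have hfnn : ∀ z : ℝ, 0 ≤ f z := by
    intro z
    apply div_nonneg _ (by positivity)
    nlinarith [Real.cos_le_one (a * z)]
  have hfmeas : Measurable f := by
    apply Measurable.div
    · exact (measurable_const.sub ((Real.continuous_cos.measurable).comp
        (measurable_const.mul measurable_id)))
    · exact measurable_id.pow_const 2
  set G : ℝ → ℝ → ℝ≥0∞ := fun z t =>
    ENNReal.ofReal ((1 - Real.cos (a * z)) * (t * Real.exp (-(z * t)))) with hG
  have key : ∫⁻ z in Ioi (0:ℝ), ENNReal.ofReal (f z) = ENNReal.ofReal (a * π / 2) := by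
    have step1 : ∀ᵐ z ∂(volume : Measure ℝ), z ∈ Ioi (0:ℝ) →
        ENNReal.ofReal (f z) = ∫⁻ t in Ioi (0:ℝ), G z t := by
      refine ae_of_all _ fun z hz => ?_
      rw [hG]
      rw [← ofReal_integral_eq_lintegral_ofReal
        ((integrable_mul_exp hz).const_mul _) ?nn]
      case nn =>
        filter_upwards [ae_restrict_mem measurableSet_Ioi] with t ht
        exact mul_nonneg (by nlinarith [Real.cos_le_one (a * z)])
          (mul_nonneg (le_of_lt ht) (Real.exp_pos _).le)
      rw [integral_const_mul, integral_mul_exp hz, hf, mul_one_div]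
    rw [setLIntegral_congr_fun_ae measurableSet_Ioi step1]
    have hGmeas : AEMeasurable (Function.uncurry G)
        ((volume.restrict (Ioi (0:ℝ))).prod (volume.restrict (Ioi (0:ℝ)))) := by
      apply Measurable.aemeasurable
      apply ENNReal.measurable_ofReal.comp
      fun_prop
    rw [lintegral_lintegral_swap hGmeas]
    have step2 : ∀ᵐ t ∂(volume : Measure ℝ), t ∈ Ioi (0:ℝ) →
        (∫⁻ z in Ioi (0:ℝ), G z t) = ENNReal.ofReal (a ^ 2 / (t ^ 2 + a ^ 2)) := by
      refine ae_of_all _ fun t ht => ?_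
      have h1 := (integrable_exp_neg_mul ht).const_mul t
      have h2 := (integrable_exp_cos ht a).const_mul t
      have heq : ∀ z : ℝ, (1 - Real.cos (a * z)) * (t * Real.exp (-(z * t)))
          = t * Real.exp (-(t * z)) - t * (Real.exp (-(t * z)) * Real.cos (a * z)) := by
        intro z; rw [mul_comm z t]; ring
      have hint : IntegrableOn
          (fun z : ℝ => (1 - Real.cos (a * z)) * (t * Real.exp (-(z * t)))) (Ioi (0:ℝ)) := by
        refine (h1.sub h2).congr (ae_of_all _ fun z => (heq z).symm)
      rw [hG, ← ofReal_integral_eq_lintegral_ofReal hint ?nn2]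
      case nn2 =>
        filter_upwards [ae_restrict_mem measurableSet_Ioi] with z hz
        exact mul_nonneg (by nlinarith [Real.cos_le_one (a * z)])
          (mul_nonneg (le_of_lt ht) (Real.exp_pos _).le)
      congr 1
      simp_rw [heq]
      rw [integral_sub h1 h2, integral_const_mul, integral_const_mul,
        integral_exp_neg_mul ht, laplace_cos ht a]
      have htne : (t:ℝ) ≠ 0 := ht.ne'
      have htane : t ^ 2 + a ^ 2 ≠ 0 := by positivity
      field_simp
      ring
    rw [setLIntegral_congr_fun_ae measurableSet_Ioi step2,
      ← ofReal_integral_eq_lintegral_ofReal (integrable_ratio ha)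
        (ae_of_all _ fun t => by positivity),
      integral_ratio ha]
  have hfint : IntegrableOn f (Ioi (0:ℝ)) := by
    refine ⟨hfmeas.aestronglyMeasurable, ?_⟩
    rw [hasFiniteIntegral_iff_ofReal (ae_of_all _ hfnn), key]
    exact ENNReal.ofReal_lt_top
  refine ⟨hfint, ?_⟩
  rw [integral_eq_lintegral_of_nonneg_ae (ae_of_all _ hfnn) hfmeas.aestronglyMeasurable, key,
    ENNReal.toReal_ofReal (by positivity)]

end OneSubCosAux

/-- `∫_{−∞}^{∞} (1 − cos(αz))/z² dz = π|α|`, the integrand being extended continuously by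
`α²/2` at `z = 0`. -/
theorem integral_one_sub_cos_div_sq (α : ℝ) :
    ∫ z : ℝ, (if z = 0 then α ^ 2 / 2 else (1 - Real.cos (α * z)) / z ^ 2) =
      Real.pi * |α| := by
  rcases eq_or_ne α 0 with rfl | hα
  · simp
  · have ha : 0 < |α| := abs_pos.2 hα
    obtain ⟨hInt, hVal⟩ := OneSubCosAux.integral_Ioi_main ha
    have hcos : ∀ z : ℝ, Real.cos (α * z) = Real.cos (|α| * z) := by
      intro z
      rcases abs_cases α with ⟨h, _⟩ | ⟨h, _⟩
      · rw [h]
      · rw [h, neg_mul, Real.cos_neg]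
    set f : ℝ → ℝ := fun z => (1 - Real.cos (|α| * z)) / z ^ 2 with hfdef
    have hae : (fun z : ℝ => if z = 0 then α ^ 2 / 2 else (1 - Real.cos (α * z)) / z ^ 2)
        =ᵐ[(volume : Measure ℝ)] f := by
      have h0 : ({0}ᶜ : Set ℝ) ∈ ae (volume : Measure ℝ) :=
        compl_mem_ae_iff.2 (measure_singleton 0)
      filter_upwards [h0] with z hz
      rw [if_neg (by simpa using hz), hcos]
    rw [integral_congr_ae hae]
    have heven : ∀ z : ℝ, f (-z) = f z := fun z => by
      simp [hfdef, mul_neg, Real.cos_neg]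
    have hIic : IntegrableOn f (Iic 0) := by
      rw [← (Measure.measurePreserving_neg (volume : Measure ℝ)).integrableOn_comp_preimage
        (Homeomorph.neg ℝ).measurableEmbedding]
      simp only [Function.comp_def, heven, neg_preimage, neg_Iic, neg_zero]
      exact (integrableOn_Ici_iff_integrableOn_Ioi enorm_ne_top).2 hInt
    have h0 := integral_comp_neg_Ioi (0:ℝ) f
    simp only [neg_zero] at h0
    simp_rw [heven] at h0
    rw [← intervalIntegral.integral_Iic_add_Ioi hIic hInt, ← h0, hVal]
    ring
end

section
/- The improper Lebesgue integral ∫_{−∞}^{∞} (z − sin z) / z³ dz equals π/2. -/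
open MeasureTheory

open Real Set Filter Asymptotics

lemma int_pow_exp {c : ℝ} (hc : 0 < c) (n : ℕ) :
    IntegrableOn (fun u : ℝ => u ^ n * Real.exp (-(c * u))) (Ioi 0) := by
  apply integrable_of_isBigO_exp_neg (half_pos hc)
    (Continuous.continuousOn (by continuity))
  apply IsLittleO.isBigO
  apply isLittleO_of_tendsto (fun x hx => absurd hx (Real.exp_pos _).ne')
  have h := tendsto_rpow_mul_exp_neg_mul_atTop_nhds_zero n (c/2) (half_pos hc)
  simp only [Real.rpow_natCast] at h
  refine h.congr fun x => ?_
  rw [mul_div_assoc, ← Real.exp_sub]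
  ring_nf

lemma laplace_x {t : ℝ} (ht : 0 < t) :
    ∫ x in Ioi (0:ℝ), x * Real.exp (-(t * x)) = 1 / t ^ 2 := by
  have h := integral_rpow_mul_exp_neg_mul_Ioi (a := 2) (r := t) (by norm_num) ht
  rw [Real.Gamma_two] at h
  have e : ∀ x ∈ Ioi (0:ℝ), x ^ ((2:ℝ) - 1) * Real.exp (-(t * x)) = x * Real.exp (-(t*x)) := by
    intro x hx; norm_num
  rw [setIntegral_congr_fun measurableSet_Ioi e] at h
  rw [h, show ((2:ℝ)) = ((2:ℕ):ℝ) by norm_num, Real.rpow_natCast]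
  rw [div_pow, one_pow, mul_one]

lemma laplace_sq {x : ℝ} (hx : 0 < x) :
    ∫ t in Ioi (0:ℝ), t ^ 2 * Real.exp (-(x * t)) = 2 / x ^ 3 := by
  have h := integral_rpow_mul_exp_neg_mul_Ioi (a := 3) (r := x) (by norm_num) hx
  have g3 : Real.Gamma 3 = 2 := by
    have h2 := Real.Gamma_nat_eq_factorial 2
    rw [show (3:ℝ) = (2:ℕ) + 1 by norm_num, h2]
    norm_num
  rw [g3] at h
  have e : ∀ u ∈ Ioi (0:ℝ), u ^ ((3:ℝ) - 1) * Real.exp (-(x * u)) = u ^ 2 * Real.exp (-(x*u)) := by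
    intro u hu
    rw [show ((3:ℝ) - 1) = ((2:ℕ):ℝ) by norm_num, Real.rpow_natCast]
  rw [setIntegral_congr_fun measurableSet_Ioi e] at h
  rw [h, show ((3:ℝ)) = ((3:ℕ):ℝ) by norm_num, Real.rpow_natCast]
  rw [div_pow, one_pow]
  ring

lemma exp_neg_tendsto {t : ℝ} (ht : 0 < t) :
    Tendsto (fun x : ℝ => Real.exp (-t * x)) atTop (nhds 0) :=
  Real.tendsto_exp_atBot.comp (tendsto_id.const_mul_atTop_of_neg (neg_neg_iff_pos.2 ht))

lemma sin_exp_integrable {t : ℝ} (ht : 0 < t) :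
    IntegrableOn (fun x : ℝ => Real.sin x * Real.exp (-(t * x))) (Ioi 0) := by
  refine Integrable.mono (g := fun x : ℝ => Real.exp (-t * x))
    (exp_neg_integrableOn_Ioi 0 ht)
    (Continuous.aestronglyMeasurable (by continuity)) ?_
  filter_upwards with x
  rw [Real.norm_eq_abs, Real.norm_eq_abs, abs_mul, Real.abs_exp, neg_mul, Real.abs_exp]
  exact mul_le_of_le_one_left (Real.exp_pos _).le (Real.abs_sin_le_one x)

lemma laplace_sin {t : ℝ} (ht : 0 < t) :
    ∫ x in Ioi (0:ℝ), Real.sin x * Real.exp (-(t * x)) = 1 / (1 + t ^ 2) := by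
  have hrec : (0:ℝ) < 1 + t ^ 2 := by positivity
  set f : ℝ → ℝ := fun x => -(Real.exp (-(t * x)) * (t * Real.sin x + Real.cos x)) / (1 + t ^ 2)
    with hf
  have hderiv : ∀ x ∈ Ici (0:ℝ), HasDerivAt f (Real.sin x * Real.exp (-(t * x))) x := by
    intro x _
    have h1 : HasDerivAt (fun x : ℝ => -(t * x)) (-t) x := by
      simpa [Pi.neg_def] using ((hasDerivAt_id x).const_mul t).neg
    have h2 : HasDerivAt (fun x : ℝ => Real.exp (-(t * x))) (Real.exp (-(t * x)) * (-t)) x :=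
      h1.exp
    have h3 : HasDerivAt (fun x : ℝ => t * Real.sin x + Real.cos x)
        (t * Real.cos x + -Real.sin x) x :=
      ((Real.hasDerivAt_sin x).const_mul t).add (Real.hasDerivAt_cos x)
    have h4 := ((h2.mul h3).neg.div_const (1 + t ^ 2))
    refine h4.congr_deriv ?_
    rw [div_eq_iff hrec.ne']
    ring
  have hbound : ∀ x : ℝ, ‖f x‖ ≤ (t + 1) / (1 + t ^ 2) * Real.exp (-t * x) := by
    intro x
    rw [hf]
    simp only [Real.norm_eq_abs, abs_div, abs_neg, abs_mul, Real.abs_exp,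
      abs_of_pos hrec]
    rw [div_le_iff₀ hrec]
    have hb : |t * Real.sin x + Real.cos x| ≤ t + 1 := by
      refine (abs_add_le _ _).trans ?_
      rw [abs_mul, abs_of_pos ht]
      have := Real.abs_sin_le_one x
      have := Real.abs_cos_le_one x
      nlinarith
    have he : Real.exp (-(t * x)) = Real.exp (-t * x) := by rw [neg_mul]
    rw [he]
    calc Real.exp (-t * x) * |t * Real.sin x + Real.cos x|
        ≤ Real.exp (-t * x) * (t + 1) := by
          exact mul_le_mul_of_nonneg_left hb (Real.exp_pos _).le
      _ = (t + 1) / (1 + t ^ 2) * Real.exp (-t * x) * (1 + t ^ 2) := by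
          field_simp
  have htend : Tendsto f atTop (nhds 0) := by
    apply squeeze_zero_norm hbound
    have := (exp_neg_tendsto ht).const_mul ((t + 1) / (1 + t ^ 2))
    simpa using this
  have := integral_Ioi_of_hasDerivAt_of_tendsto'
    (fun x hx => hderiv x hx) (sin_exp_integrable ht) htend
  rw [this, hf]
  norm_num
  rw [neg_div, neg_neg, one_div]

lemma keyA_int {x : ℝ} (hx : 0 < x) :
    IntegrableOn (fun t : ℝ => (x - Real.sin x) * (t ^ 2 * Real.exp (-(x * t)))) (Ioi 0) :=
  (int_pow_exp hx 2).const_mul _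

lemma keyA {x : ℝ} (hx : 0 < x) :
    ∫ t in Ioi (0:ℝ), (x - Real.sin x) * (t ^ 2 * Real.exp (-(x * t)))
      = (x - Real.sin x) * (2 / x ^ 3) := by
  rw [integral_const_mul, laplace_sq hx]

lemma x_exp_integrable {t : ℝ} (ht : 0 < t) :
    IntegrableOn (fun x : ℝ => x * Real.exp (-(t * x))) (Ioi 0) := by
  simpa using int_pow_exp ht 1

lemma keyB_int {t : ℝ} (ht : 0 < t) :
    IntegrableOn (fun x : ℝ => (x - Real.sin x) * (t ^ 2 * Real.exp (-(x * t)))) (Ioi 0) := by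
  have h := (((x_exp_integrable ht).sub (sin_exp_integrable ht)).const_mul (t ^ 2))
  refine h.congr (Filter.Eventually.of_forall fun x => ?_)
  simp only [Pi.sub_apply]
  rw [mul_comm x t]; ring

lemma keyB {t : ℝ} (ht : 0 < t) :
    ∫ x in Ioi (0:ℝ), (x - Real.sin x) * (t ^ 2 * Real.exp (-(x * t)))
      = 1 / (1 + t ^ 2) := by
  have e : ∀ x ∈ Ioi (0:ℝ), (x - Real.sin x) * (t ^ 2 * Real.exp (-(x * t))) =
      t ^ 2 * (x * Real.exp (-(t * x)) - Real.sin x * Real.exp (-(t * x))) := by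
    intro x _; rw [mul_comm x t]; ring
  rw [setIntegral_congr_fun measurableSet_Ioi e, integral_const_mul,
    integral_sub (x_exp_integrable ht) (sin_exp_integrable ht), laplace_x ht, laplace_sin ht]
  have h1 : (0:ℝ) < 1 + t ^ 2 := by positivity
  field_simp
  ring

lemma lint_g2 : ∫⁻ x in Ioi (0:ℝ), ENNReal.ofReal ((x - Real.sin x) * (2 / x ^ 3))
    = ENNReal.ofReal (Real.pi / 2) := by
  have meas : AEMeasurable (Function.uncurry fun x t : ℝ =>
      ENNReal.ofReal ((x - Real.sin x) * (t ^ 2 * Real.exp (-(x * t)))))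
      ((volume.restrict (Ioi 0)).prod (volume.restrict (Ioi 0))) := by
    apply Measurable.aemeasurable
    apply ENNReal.measurable_ofReal.comp
    apply Continuous.measurable
    fun_prop
  have swap := lintegral_lintegral_swap meas
  calc ∫⁻ x in Ioi (0:ℝ), ENNReal.ofReal ((x - Real.sin x) * (2 / x ^ 3))
      = ∫⁻ x in Ioi (0:ℝ), ∫⁻ t in Ioi (0:ℝ),
          ENNReal.ofReal ((x - Real.sin x) * (t ^ 2 * Real.exp (-(x * t)))) := by
        refine setLIntegral_congr_fun measurableSet_Ioi
          (fun x hx => ?_)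
        rw [← keyA hx]
        exact ofReal_integral_eq_lintegral_ofReal (keyA_int hx)
          (Filter.Eventually.of_forall fun t =>
            mul_nonneg (sub_nonneg.2 (Real.sin_le hx.le)) (by positivity))
    _ = ∫⁻ t in Ioi (0:ℝ), ∫⁻ x in Ioi (0:ℝ),
          ENNReal.ofReal ((x - Real.sin x) * (t ^ 2 * Real.exp (-(x * t)))) := swap
    _ = ∫⁻ t in Ioi (0:ℝ), ENNReal.ofReal (1 / (1 + t ^ 2)) := by
        refine setLIntegral_congr_fun measurableSet_Ioi
          (fun t ht => ?_)
        rw [← keyB ht]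
        refine (ofReal_integral_eq_lintegral_ofReal (keyB_int ht) ?_).symm
        refine (ae_restrict_iff' measurableSet_Ioi).2
          (Filter.Eventually.of_forall fun x hx =>
            mul_nonneg (sub_nonneg.2 (Real.sin_le hx.le)) (by positivity))
    _ = ENNReal.ofReal (Real.pi / 2) := by
        have hval : (∫ x in Ioi (0:ℝ), (1 + x ^ 2)⁻¹) = Real.pi / 2 := by
          rw [integral_Ioi_inv_one_add_sq]; simp
        have hc : ∫⁻ t in Ioi (0:ℝ), ENNReal.ofReal (1 / (1 + t ^ 2))
            = ∫⁻ t in Ioi (0:ℝ), ENNReal.ofReal ((1 + t ^ 2)⁻¹) := by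
          refine setLIntegral_congr_fun measurableSet_Ioi
            (fun t _ => ?_)
          rw [one_div]
        rw [hc, ← ofReal_integral_eq_lintegral_ofReal
          integrable_inv_one_add_sq.integrableOn
          (Filter.Eventually.of_forall fun t => by positivity), hval]

lemma int_g2 : ∫ x in Ioi (0:ℝ), (x - Real.sin x) * (2 / x ^ 3) = Real.pi / 2 := by
  have hm : AEMeasurable (fun x : ℝ => (x - Real.sin x) * (2 / x ^ 3))
      (volume.restrict (Ioi 0)) := by
    apply Measurable.aemeasurable
    exact (measurable_id.sub Real.measurable_sin).mul
      (measurable_const.div ((measurable_id.pow_const 3)))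
  have hnn : 0 ≤ᵐ[volume.restrict (Ioi (0:ℝ))] fun x => (x - Real.sin x) * (2 / x ^ 3) := by
    refine (ae_restrict_iff' measurableSet_Ioi).2
      (Filter.Eventually.of_forall fun x hx => by
        have hx' : (0:ℝ) < x := hx
        exact mul_nonneg (sub_nonneg.2 (Real.sin_le hx'.le)) (by positivity))
  rw [integral_eq_lintegral_of_nonneg_ae hnn hm.aestronglyMeasurable, lint_g2,
    ENNReal.toReal_ofReal (by positivity)]

/-- `∫_{−∞}^{∞} (z − sin z)/z³ dz = π/2`, the integrand being extended continuously by `1/6`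
at `z = 0`. -/
theorem integral_sub_sin_div_cube :
    ∫ z : ℝ, (if z = 0 then (1 : ℝ) / 6 else (z - Real.sin z) / z ^ 3) = Real.pi / 2 := by
  have h1 : ∀ z : ℝ, (if z = 0 then (1 : ℝ) / 6 else (z - Real.sin z) / z ^ 3)
      = (fun u : ℝ => if u = 0 then (1 : ℝ) / 6 else (u - Real.sin u) / u ^ 3) |z| := by
    intro z
    rcases lt_trichotomy z 0 with h | h | h
    · rw [abs_of_neg h]
      simp only [if_neg h.ne, if_neg (neg_ne_zero.2 h.ne), Real.sin_neg]
      rw [div_eq_div_iff (pow_ne_zero 3 h.ne) (pow_ne_zero 3 (neg_ne_zero.2 h.ne))]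
      ring
    · simp [h]
    · rw [abs_of_pos h]
  have key : (∫ z : ℝ, (if z = 0 then (1 : ℝ) / 6 else (z - Real.sin z) / z ^ 3))
      = ∫ z : ℝ, (fun u : ℝ => if u = 0 then (1 : ℝ) / 6 else (u - Real.sin u) / u ^ 3) |z| :=
    integral_congr_ae (Filter.Eventually.of_forall h1)
  rw [key]
  rw [integral_comp_abs (f := fun u : ℝ => if u = 0 then (1 : ℝ) / 6 else (u - Real.sin u) / u ^ 3)]
  have e3 : ∫ x in Ioi (0:ℝ), (x - Real.sin x) * (2 / x ^ 3)
      = ∫ x in Ioi (0:ℝ), 2 * (if x = 0 then (1 : ℝ) / 6 else (x - Real.sin x) / x ^ 3) := by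
    refine setIntegral_congr_fun measurableSet_Ioi fun x hx => ?_
    rw [if_neg (ne_of_gt hx)]
    ring
  have h2 := int_g2
  rw [e3, integral_const_mul] at h2
  exact h2
end

section
/- For all real numbers a₁, a₂, the integral ∫_{−∞}^{∞} (e^{i a₁ z} − 1)(e^{−i a₂ z} − 1) / z² dz converges and equals π ( |a₁| + |a₂| − |a₁ − a₂| ). -/
open MeasureTheory Set Filter Topology


noncomputable def Fc (a : ℝ) (x : ℝ) : ℝ :=
  if x = 0 then a ^ 2 / 2 else (1 - Real.cos (a * x)) / x ^ 2

lemma one_sub_cos_le_sq (y : ℝ) : 1 - Real.cos y ≤ y ^ 2 / 2 := by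
  have := Real.one_sub_sq_div_two_le_cos (x := y); linarith

lemma one_sub_cos_nonneg (y : ℝ) : 0 ≤ 1 - Real.cos y := by
  have := Real.cos_le_one y; linarith

lemma Fc_nonneg (a x : ℝ) : 0 ≤ Fc a x := by
  unfold Fc; split
  · positivity
  · exact div_nonneg (one_sub_cos_nonneg _) (sq_nonneg _)

lemma Fc_le (a x : ℝ) : Fc a x ≤ (a ^ 2 / 2 + 2) * (1 + x ^ 2)⁻¹ := by
  unfold Fc; split
  · rename_i h; subst h; norm_num
  · rename_i h
    have hx : 0 < x ^ 2 := by positivity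
    have h3 : (0:ℝ) < 1 + x ^ 2 := by positivity
    have h1 : 1 - Real.cos (a * x) ≤ (a * x) ^ 2 / 2 := one_sub_cos_le_sq _
    have h2 : 1 - Real.cos (a * x) ≤ 2 := by
      have := Real.neg_one_le_cos (a * x); linarith
    rw [div_le_iff₀ hx]
    have : (a ^ 2 / 2 + 2) * (1 + x ^ 2)⁻¹ * x ^ 2 = (a ^ 2 / 2 + 2) * (x ^ 2 / (1 + x ^ 2)) := by
      field_simp
    rw [this, mul_div_assoc' , le_div_iff₀ h3]
    nlinarith [one_sub_cos_nonneg (a * x)]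

lemma Fc_meas (a : ℝ) : Measurable (Fc a) := by
  unfold Fc
  apply Measurable.ite
  · exact measurableSet_eq
  · exact measurable_const
  · fun_prop

lemma Fc_integrable (a : ℝ) : Integrable (Fc a) := by
  refine Integrable.mono' (integrable_inv_one_add_sq.const_mul (a ^ 2 / 2 + 2))
    (Fc_meas a).aestronglyMeasurable (ae_of_all _ fun x => ?_)
  rw [Real.norm_eq_abs, abs_of_nonneg (Fc_nonneg a x)]
  exact Fc_le a x


lemma tendsto_exp_neg_mul (x : ℝ) (hx : 0 < x) :
    Tendsto (fun t : ℝ => Real.exp (-(x * t))) atTop (nhds 0) := by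
  have h1 : Tendsto (fun t : ℝ => x * t) atTop atTop :=
    Tendsto.const_mul_atTop hx tendsto_id
  exact Real.tendsto_exp_neg_atTop_nhds_zero.comp h1

lemma tendsto_id_mul_exp_neg_mul (x : ℝ) (hx : 0 < x) :
    Tendsto (fun t : ℝ => (x * t) * Real.exp (-(x * t))) atTop (nhds 0) := by
  have h1 : Tendsto (fun t : ℝ => x * t) atTop atTop :=
    Tendsto.const_mul_atTop hx tendsto_id
  have := (Real.tendsto_pow_mul_exp_neg_atTop_nhds_zero 1).comp h1
  simpa [Function.comp_def] using this

lemma tendsto_mul_exp (x : ℝ) (hx : 0 < x) :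
    Tendsto (fun t : ℝ => -(t / x + 1 / x ^ 2) * Real.exp (-(x * t))) atTop (nhds 0) := by
  have hne : x ≠ 0 := ne_of_gt hx
  have heq : (fun t : ℝ => -(t / x + 1 / x ^ 2) * Real.exp (-(x * t)))
      = fun t : ℝ => -((1/x^2) * ((x*t) * Real.exp (-(x*t))) + (1/x^2) * Real.exp (-(x*t))) := by
    funext t; field_simp
  rw [heq]
  have := ((tendsto_id_mul_exp_neg_mul x hx).const_mul (1/x^2)).add
    ((tendsto_exp_neg_mul x hx).const_mul (1/x^2))
  simpa using this.neg

lemma L1 (x : ℝ) (hx : 0 < x) :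
    IntegrableOn (fun t : ℝ => t * Real.exp (-(x * t))) (Ioi 0) ∧
      ∫ t in Ioi (0:ℝ), t * Real.exp (-(x * t)) = 1 / x ^ 2 := by
  have hderiv : ∀ t ∈ Ici (0:ℝ),
      HasDerivAt (fun t : ℝ => -(t / x + 1 / x ^ 2) * Real.exp (-(x * t)))
        (t * Real.exp (-(x * t))) t := by
    intro t _
    have h1 : HasDerivAt (fun t : ℝ => -(t / x + 1 / x ^ 2)) (-(1/x)) t := by
      have := ((hasDerivAt_id t).div_const x).add_const (1 / x ^ 2)
      exact this.neg
    have h2 : HasDerivAt (fun t : ℝ => Real.exp (-(x * t))) (-x * Real.exp (-(x*t))) t := by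
      have h3 : HasDerivAt (fun t : ℝ => -(x * t)) (-x) t := by
        simpa [Pi.neg_def] using ((hasDerivAt_id t).const_mul x).neg
      simpa [mul_comm, Function.comp_def] using (Real.hasDerivAt_exp (-(x*t))).comp t h3
    have := h1.mul h2
    refine this.congr_deriv ?_
    field_simp
    ring
  have hpos : ∀ t ∈ Ioi (0:ℝ), 0 ≤ t * Real.exp (-(x * t)) := fun t ht =>
    mul_nonneg (le_of_lt ht) (Real.exp_nonneg _)
  have htend : Tendsto (fun t : ℝ => -(t / x + 1 / x ^ 2) * Real.exp (-(x * t)))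
      atTop (nhds 0) := tendsto_mul_exp x hx
  constructor
  · exact integrableOn_Ioi_deriv_of_nonneg' hderiv hpos htend
  · have := integral_Ioi_of_hasDerivAt_of_nonneg' hderiv hpos htend
    rw [this]; norm_num

lemma L2 (t : ℝ) (ht : 0 < t) :
    IntegrableOn (fun x : ℝ => (1 - Real.cos x) * Real.exp (-(t * x))) (Ioi 0) ∧
      ∫ x in Ioi (0:ℝ), (1 - Real.cos x) * Real.exp (-(t * x))
        = 1 / t - t / (1 + t ^ 2) := by
  have hne : t ≠ 0 := ne_of_gt ht
  set G : ℝ → ℝ := fun x => -((1/t) * Real.exp (-(t*x)))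
    - Real.exp (-(t*x)) * (Real.sin x - t * Real.cos x) / (1 + t^2) with hG
  have hderiv : ∀ x ∈ Ici (0:ℝ),
      HasDerivAt G ((1 - Real.cos x) * Real.exp (-(t * x))) x := by
    intro x _
    have h2 : HasDerivAt (fun x : ℝ => Real.exp (-(t*x))) (-t * Real.exp (-(t*x))) x := by
      have h3 : HasDerivAt (fun x : ℝ => -(t * x)) (-t) x := by
        simpa [Pi.neg_def] using ((hasDerivAt_id x).const_mul t).neg
      simpa [mul_comm, Function.comp_def] using (Real.hasDerivAt_exp (-(t*x))).comp x h3
    have hsin : HasDerivAt (fun x : ℝ => Real.sin x - t * Real.cos x)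
        (Real.cos x + t * Real.sin x) x := by
      have := (Real.hasDerivAt_sin x).sub ((Real.hasDerivAt_cos x).const_mul t)
      simpa [mul_comm, Pi.sub_def] using this
    have hfirst : HasDerivAt (fun x : ℝ => -((1/t) * Real.exp (-(t*x))))
        (-((1/t) * (-t * Real.exp (-(t*x))))) x := (h2.const_mul (1/t)).neg
    have hsecond := ((h2.mul hsin).div_const (1 + t^2))
    have := hfirst.sub hsecond
    refine this.congr_deriv ?_
    have h1t : (1 + t^2) ≠ 0 := by positivity
    field_simp
    ring
  have hpos : ∀ x ∈ Ioi (0:ℝ), 0 ≤ (1 - Real.cos x) * Real.exp (-(t * x)) := by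
    intro x _
    have := Real.cos_le_one x
    exact mul_nonneg (by linarith) (Real.exp_nonneg _)
  have htend : Tendsto G atTop (nhds 0) := by
    have h1 : Tendsto (fun x : ℝ => -((1/t) * Real.exp (-(t*x)))) atTop (nhds 0) := by
      simpa using ((tendsto_exp_neg_mul t ht).const_mul (1/t)).neg
    have h2 : Tendsto (fun x : ℝ => Real.exp (-(t*x)) * (Real.sin x - t * Real.cos x) / (1 + t^2))
        atTop (nhds 0) := by
      apply squeeze_zero_norm (a := fun x => (1 + |t|) * Real.exp (-(t*x)))
      · intro x
        have hb : |Real.sin x - t * Real.cos x| ≤ 1 + |t| := by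
          calc |Real.sin x - t * Real.cos x| ≤ |Real.sin x| + |t * Real.cos x| := abs_sub _ _
            _ ≤ 1 + |t| := by
                rw [abs_mul]
                have := Real.abs_sin_le_one x
                have := Real.abs_cos_le_one x
                nlinarith [abs_nonneg t]
        have h1t : (1:ℝ) ≤ 1 + t^2 := by nlinarith
        rw [norm_div, norm_mul, Real.norm_eq_abs, Real.norm_eq_abs, Real.norm_eq_abs,
          abs_of_nonneg (Real.exp_nonneg _), abs_of_pos (by positivity : (0:ℝ) < 1 + t^2)]
        rw [div_le_iff₀ (by positivity : (0:ℝ) < 1 + t^2)]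
        calc Real.exp (-(t*x)) * |Real.sin x - t * Real.cos x|
            ≤ Real.exp (-(t*x)) * (1 + |t|) := by
              exact mul_le_mul_of_nonneg_left hb (Real.exp_nonneg _)
          _ ≤ (1 + |t|) * Real.exp (-(t*x)) * (1 + t^2) := by
              nlinarith [mul_nonneg (mul_nonneg (by positivity : (0:ℝ) ≤ 1 + |t|)
                (Real.exp_nonneg (-(t*x)))) (sq_nonneg t)]
      · simpa using (tendsto_exp_neg_mul t ht).const_mul (1 + |t|)
    rw [hG]; simpa using h1.sub h2
  constructor
  · exact integrableOn_Ioi_deriv_of_nonneg' hderiv hpos htend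
  · have := integral_Ioi_of_hasDerivAt_of_nonneg' hderiv hpos htend
    rw [this, hG]
    simp [Real.sin_zero, Real.cos_zero]
    field_simp
    ring

lemma Fc_one_Ioi : ∫ x in Ioi (0:ℝ), Fc 1 x = Real.pi / 2 := by
  have hint : IntegrableOn (Fc 1) (Ioi 0) := (Fc_integrable 1).integrableOn
  have hnn : 0 ≤ᵐ[volume.restrict (Ioi (0:ℝ))] Fc 1 := ae_of_all _ (Fc_nonneg 1)
  have lhs : ENNReal.ofReal (∫ x in Ioi (0:ℝ), Fc 1 x)
      = ∫⁻ x in Ioi (0:ℝ), ENNReal.ofReal (Fc 1 x) :=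
    ofReal_integral_eq_lintegral_ofReal hint hnn
  have key : ∫⁻ x in Ioi (0:ℝ), ENNReal.ofReal (Fc 1 x) = ENNReal.ofReal (Real.pi / 2) := by
    have step1 : ∫⁻ x in Ioi (0:ℝ), ENNReal.ofReal (Fc 1 x)
        = ∫⁻ x in Ioi (0:ℝ), ∫⁻ t in Ioi (0:ℝ),
            ENNReal.ofReal ((1 - Real.cos x) * (t * Real.exp (-(x * t)))) := by
      refine setLIntegral_congr_fun_ae measurableSet_Ioi (ae_of_all _ fun x hx => ?_)
      have hx0 : x ≠ 0 := ne_of_gt hx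
      have h1 : ∫⁻ t in Ioi (0:ℝ), ENNReal.ofReal ((1 - Real.cos x) * (t * Real.exp (-(x * t))))
          = ENNReal.ofReal (1 - Real.cos x) * ∫⁻ t in Ioi (0:ℝ),
              ENNReal.ofReal (t * Real.exp (-(x * t))) := by
        rw [← lintegral_const_mul' _ _ ENNReal.ofReal_ne_top]
        congr 1; funext t
        rw [← ENNReal.ofReal_mul (one_sub_cos_nonneg x)]
      have h2 : ∀ᵐ t ∂(volume.restrict (Ioi (0:ℝ))), (0:ℝ) ≤ t * Real.exp (-(x * t)) :=
        (ae_restrict_mem measurableSet_Ioi).mono fun t ht =>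
          show (0:ℝ) ≤ t * Real.exp (-(x * t)) from
            mul_nonneg (le_of_lt ht) (Real.exp_nonneg _)
      rw [h1, ← ofReal_integral_eq_lintegral_ofReal (L1 x hx).1 h2,
        (L1 x hx).2, ← ENNReal.ofReal_mul (one_sub_cos_nonneg x)]
      unfold Fc
      rw [if_neg hx0]
      congr 1
      field_simp
    have hmeas : AEMeasurable (Function.uncurry fun (x t : ℝ) =>
        ENNReal.ofReal ((1 - Real.cos x) * (t * Real.exp (-(x * t)))))
        ((volume.restrict (Ioi (0:ℝ))).prod (volume.restrict (Ioi (0:ℝ)))) := by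
      have hc : Continuous fun p : ℝ × ℝ =>
          (1 - Real.cos p.1) * (p.2 * Real.exp (-(p.1 * p.2))) :=
        (continuous_const.sub (Real.continuous_cos.comp continuous_fst)).mul
          (continuous_snd.mul
            (Real.continuous_exp.comp (continuous_fst.mul continuous_snd).neg))
      exact (hc.measurable.ennreal_ofReal).aemeasurable
    have step2 := lintegral_lintegral_swap hmeas
    have step3 : ∫⁻ t in Ioi (0:ℝ), ∫⁻ x in Ioi (0:ℝ),
        ENNReal.ofReal ((1 - Real.cos x) * (t * Real.exp (-(x * t))))
        = ∫⁻ t in Ioi (0:ℝ), ENNReal.ofReal ((1 + t ^ 2)⁻¹) := by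
      refine setLIntegral_congr_fun_ae measurableSet_Ioi (ae_of_all _ fun t ht => ?_)
      have ht0 : t ≠ 0 := ne_of_gt ht
      have h1 : ∀ x : ℝ, (1 - Real.cos x) * (t * Real.exp (-(x * t)))
          = t * ((1 - Real.cos x) * Real.exp (-(t * x))) := by
        intro x; rw [mul_comm x t]; ring
      simp_rw [h1]
      have h2 : ∫⁻ x in Ioi (0:ℝ),
          ENNReal.ofReal (t * ((1 - Real.cos x) * Real.exp (-(t * x))))
          = ENNReal.ofReal t * ∫⁻ x in Ioi (0:ℝ),
              ENNReal.ofReal ((1 - Real.cos x) * Real.exp (-(t * x))) := by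
        rw [← lintegral_const_mul' _ _ ENNReal.ofReal_ne_top]
        congr 1; funext x
        rw [← ENNReal.ofReal_mul (le_of_lt ht)]
      have h3 : ∀ᵐ x ∂(volume.restrict (Ioi (0:ℝ))), (0:ℝ) ≤ (1 - Real.cos x) * Real.exp (-(t * x)) :=
        ae_of_all _ fun x =>
          show (0:ℝ) ≤ (1 - Real.cos x) * Real.exp (-(t * x)) from
            mul_nonneg (one_sub_cos_nonneg x) (Real.exp_nonneg _)
      rw [h2, ← ofReal_integral_eq_lintegral_ofReal (L2 t ht).1 h3, (L2 t ht).2,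
        ← ENNReal.ofReal_mul (le_of_lt ht)]
      congr 1
      have h1t : (1 + t^2) ≠ 0 := by positivity
      field_simp
      ring
    have step4 : ∫⁻ t in Ioi (0:ℝ), ENNReal.ofReal ((1 + t ^ 2)⁻¹)
        = ENNReal.ofReal (Real.pi / 2) := by
      rw [← ofReal_integral_eq_lintegral_ofReal
        (integrable_inv_one_add_sq.integrableOn)
        (ae_of_all _ fun t => by positivity)]
      congr 1
      rw [integral_Ioi_inv_one_add_sq]
      simp
    rw [step1, step2, step3, step4]
  rw [key] at lhs
  have h0 : 0 ≤ ∫ x in Ioi (0:ℝ), Fc 1 x :=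
    setIntegral_nonneg measurableSet_Ioi fun x _ => Fc_nonneg 1 x
  have hpi : (0:ℝ) ≤ Real.pi / 2 := by positivity
  exact (ENNReal.ofReal_eq_ofReal_iff h0 hpi).mp lhs

lemma Fc_even (a x : ℝ) : Fc a (-x) = Fc a x := by
  unfold Fc
  by_cases hx : x = 0
  · simp [hx]
  · rw [if_neg (by simpa using hx), if_neg hx, mul_neg, Real.cos_neg, neg_pow]
    ring_nf

lemma Fc_one_integral : ∫ x : ℝ, Fc 1 x = Real.pi := by
  have habs : ∀ x : ℝ, Fc 1 |x| = Fc 1 x := by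
    intro x
    rcases abs_choice x with h | h
    · rw [h]
    · rw [h, Fc_even]
  have := integral_comp_abs (f := Fc 1)
  rw [Fc_one_Ioi] at this
  calc ∫ x : ℝ, Fc 1 x = ∫ x : ℝ, Fc 1 |x| := by simp_rw [habs]
    _ = Real.pi := by rw [this]; ring

lemma Fc_integral (a : ℝ) : ∫ x : ℝ, Fc a x = Real.pi * |a| := by
  by_cases ha : a = 0
  · subst ha
    have : Fc 0 = fun _ => (0:ℝ) := by
      funext x; unfold Fc; split <;> simp
    rw [this]; simp
  · have hscale : ∀ x : ℝ, Fc a x = a ^ 2 * Fc 1 (a * x) := by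
      intro x
      unfold Fc
      by_cases hx : x = 0
      · rw [if_pos hx, if_pos (by simp [hx])]; ring
      · rw [if_neg hx, if_neg (mul_ne_zero ha hx), one_mul, mul_pow]
        field_simp
    simp_rw [hscale]
    rw [integral_const_mul, MeasureTheory.Measure.integral_comp_mul_left (Fc 1) a, Fc_one_integral,
      smul_eq_mul, abs_inv]
    rw [← sq_abs a]
    field_simp

noncomputable def gC (a₁ a₂ : ℝ) (z : ℝ) : ℂ :=
  if z = 0 then ((a₁ * a₂ : ℝ) : ℂ)
  else (Complex.exp (Complex.I * a₁ * z) - 1) * (Complex.exp (-Complex.I * a₂ * z) - 1) /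
    (z : ℂ) ^ 2

lemma norm_exp_I_mul_sub_one (θ : ℝ) :
    ‖Complex.exp (Complex.I * θ) - 1‖ = Real.sqrt (2 * (1 - Real.cos θ)) := by
  have h1 : Complex.I * θ = (θ : ℂ) * Complex.I := by ring
  rw [h1, Complex.exp_mul_I]
  have h2 : Complex.cos θ + Complex.sin θ * Complex.I - 1
      = ((Real.cos θ - 1 : ℝ) : ℂ) + ((Real.sin θ : ℝ) : ℂ) * Complex.I := by
    push_cast [← Complex.ofReal_cos, ← Complex.ofReal_sin]
    ring
  rw [h2, Complex.norm_add_mul_I]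
  congr 1
  nlinarith [Real.sin_sq_add_cos_sq θ]

lemma sqrt_mul_sqrt_le (u v : ℝ) (hu : 0 ≤ u) (hv : 0 ≤ v) :
    Real.sqrt u * Real.sqrt v ≤ (u + v) / 2 := by
  nlinarith [sq_nonneg (Real.sqrt u - Real.sqrt v), Real.sq_sqrt hu, Real.sq_sqrt hv,
    Real.sqrt_nonneg u, Real.sqrt_nonneg v]

lemma gC_norm_le (a₁ a₂ : ℝ) (z : ℝ) : ‖gC a₁ a₂ z‖ ≤ Fc a₁ z + Fc a₂ z := by
  unfold gC Fc
  by_cases hz : z = 0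
  · rw [if_pos hz, if_pos hz, if_pos hz, Complex.norm_real, Real.norm_eq_abs, abs_mul]
    nlinarith [sq_nonneg (|a₁| - |a₂|), abs_nonneg a₁, abs_nonneg a₂, sq_abs a₁, sq_abs a₂]
  · rw [if_neg hz, if_neg hz, if_neg hz]
    have e1 : Complex.I * a₁ * z = Complex.I * ((a₁ * z : ℝ) : ℂ) := by push_cast; ring
    have e2 : -Complex.I * a₂ * z = Complex.I * ((-(a₂ * z) : ℝ) : ℂ) := by push_cast; ring
    rw [norm_div, norm_mul, e1, e2, norm_exp_I_mul_sub_one, norm_exp_I_mul_sub_one,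
      Real.cos_neg]
    have hz2 : (0:ℝ) < z ^ 2 := by positivity
    have hnorm : ‖(z:ℂ) ^ 2‖ = z ^ 2 := by
      rw [norm_pow, Complex.norm_real, Real.norm_eq_abs, sq_abs]
    rw [hnorm, div_le_iff₀ hz2, add_mul, div_mul_cancel₀ _ (ne_of_gt hz2),
      div_mul_cancel₀ _ (ne_of_gt hz2)]
    have := sqrt_mul_sqrt_le (2 * (1 - Real.cos (a₁ * z))) (2 * (1 - Real.cos (a₂ * z)))
      (by nlinarith [one_sub_cos_nonneg (a₁ * z)]) (by nlinarith [one_sub_cos_nonneg (a₂ * z)])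
    linarith

lemma gC_meas (a₁ a₂ : ℝ) : Measurable (gC a₁ a₂) := by
  unfold gC
  apply Measurable.ite measurableSet_eq measurable_const
  apply Measurable.div
  · fun_prop
  · fun_prop

lemma gC_integrable (a₁ a₂ : ℝ) : Integrable (gC a₁ a₂) := by
  refine Integrable.mono' ((Fc_integrable a₁).add (Fc_integrable a₂))
    (gC_meas a₁ a₂).aestronglyMeasurable (ae_of_all _ fun z => gC_norm_le a₁ a₂ z)

lemma gC_conj (a₁ a₂ : ℝ) (z : ℝ) : gC a₁ a₂ (-z) = (starRingEnd ℂ) (gC a₁ a₂ z) := by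
  unfold gC
  by_cases hz : z = 0
  · subst hz; simp
  · rw [if_neg (by simpa using hz), if_neg hz]
    rw [map_div₀, map_mul, map_sub, map_sub, map_one, map_pow,
      ← Complex.exp_conj, ← Complex.exp_conj]
    have c1 : (starRingEnd ℂ) (Complex.I * a₁ * z) = Complex.I * a₁ * ((-z : ℝ) : ℂ) := by
      simp [Complex.conj_I]
    have c2 : (starRingEnd ℂ) (-Complex.I * a₂ * z) = -Complex.I * a₂ * ((-z : ℝ) : ℂ) := by
      simp [Complex.conj_I]
    have c3 : (starRingEnd ℂ) ((z : ℝ) : ℂ) = ((z : ℝ) : ℂ) := Complex.conj_ofReal z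
    rw [c1, c2, c3]
    have c4 : (((-z : ℝ)) : ℂ) ^ 2 = ((z : ℝ) : ℂ) ^ 2 := by push_cast; ring
    rw [c4]

lemma gC_re (a₁ a₂ : ℝ) (z : ℝ) : (gC a₁ a₂ z).re = Fc a₁ z + Fc a₂ z - Fc (a₁ - a₂) z := by
  unfold gC Fc
  by_cases hz : z = 0
  · rw [if_pos hz, if_pos hz, if_pos hz, if_pos hz, Complex.ofReal_re]
    ring
  · rw [if_neg hz, if_neg hz, if_neg hz, if_neg hz]
    have e1 : Complex.I * a₁ * z = ((a₁ * z : ℝ) : ℂ) * Complex.I := by push_cast; ring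
    have e2 : -Complex.I * a₂ * z = ((-(a₂ * z) : ℝ) : ℂ) * Complex.I := by push_cast; ring
    have e3 : ((z : ℂ)) ^ 2 = ((z ^ 2 : ℝ) : ℂ) := by push_cast; ring
    rw [e1, e2, e3, Complex.div_ofReal_re]
    rw [Complex.mul_re, Complex.sub_re, Complex.sub_re, Complex.sub_im, Complex.sub_im,
      Complex.one_re, Complex.one_im, Complex.exp_ofReal_mul_I_re, Complex.exp_ofReal_mul_I_re,
      Complex.exp_ofReal_mul_I_im, Complex.exp_ofReal_mul_I_im, Real.cos_neg, Real.sin_neg]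
    have hz2 : z ^ 2 ≠ 0 := pow_ne_zero 2 hz
    rw [show (a₁ - a₂) * z = a₁ * z - a₂ * z by ring, Real.cos_sub]
    field_simp
    ring

/-- `∫_{−∞}^{∞} (e^{ia₁z} − 1)(e^{−ia₂z} − 1)/z² dz` converges and equals
`π(|a₁| + |a₂| − |a₁ − a₂|)`; the integrand is extended continuously by `a₁a₂` at `z = 0`. -/
theorem integral_exp_prod_div_sq (a₁ a₂ : ℝ) :
    Integrable (fun z : ℝ => if z = 0 then ((a₁ * a₂ : ℝ) : ℂ)
      else (Complex.exp (Complex.I * a₁ * z) - 1) * (Complex.exp (-Complex.I * a₂ * z) - 1) /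
        (z : ℂ) ^ 2) ∧
    ∫ z : ℝ, (if z = 0 then ((a₁ * a₂ : ℝ) : ℂ)
      else (Complex.exp (Complex.I * a₁ * z) - 1) * (Complex.exp (-Complex.I * a₂ * z) - 1) /
        (z : ℂ) ^ 2) =
      ((Real.pi * (|a₁| + |a₂| - |a₁ - a₂|) : ℝ) : ℂ) := by
  have hg : (fun z : ℝ => if z = 0 then ((a₁ * a₂ : ℝ) : ℂ)
      else (Complex.exp (Complex.I * a₁ * z) - 1) * (Complex.exp (-Complex.I * a₂ * z) - 1) /
        (z : ℂ) ^ 2) = gC a₁ a₂ := rfl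
  rw [hg]
  have hint := gC_integrable a₁ a₂
  refine ⟨hint, ?_⟩
  have hsym : (starRingEnd ℂ) (∫ z : ℝ, gC a₁ a₂ z) = ∫ z : ℝ, gC a₁ a₂ z := by
    rw [← integral_conj]
    calc ∫ z : ℝ, (starRingEnd ℂ) (gC a₁ a₂ z) = ∫ z : ℝ, gC a₁ a₂ (-z) := by
          simp_rw [gC_conj]
      _ = ∫ z : ℝ, gC a₁ a₂ z := integral_neg_eq_self _ _
  have hreal : (((∫ z : ℝ, gC a₁ a₂ z).re : ℝ) : ℂ) = ∫ z : ℝ, gC a₁ a₂ z :=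
    Complex.conj_eq_iff_re.mp hsym
  have hre : (∫ z : ℝ, gC a₁ a₂ z).re
      = Real.pi * |a₁| + Real.pi * |a₂| - Real.pi * |a₁ - a₂| := by
    have h := integral_re hint
    simp only [RCLike.re_to_complex] at h
    rw [← h]
    calc ∫ z : ℝ, (gC a₁ a₂ z).re
        = ∫ z : ℝ, (Fc a₁ z + Fc a₂ z - Fc (a₁ - a₂) z) := by simp_rw [gC_re]
      _ = Real.pi * |a₁| + Real.pi * |a₂| - Real.pi * |a₁ - a₂| := by
          have h1 : ∫ z : ℝ, (Fc a₁ z + Fc a₂ z - Fc (a₁ - a₂) z)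
              = ((∫ z : ℝ, Fc a₁ z) + ∫ z : ℝ, Fc a₂ z) - ∫ z : ℝ, Fc (a₁ - a₂) z := by
            rw [← integral_add (Fc_integrable a₁) (Fc_integrable a₂)]
            exact integral_sub ((Fc_integrable a₁).add (Fc_integrable a₂)) (Fc_integrable _)
          rw [h1, Fc_integral, Fc_integral, Fc_integral]
  rw [← hreal, hre]
  push_cast
  ring
end

section
/- For all real numbers a₁, a₂, the integral M(a₁, a₂) = ∫_{−∞}^{∞} (e^{i a₁ z} − 1 − i a₁ z)(e^{−i a₂ z} − 1 + i a₂ z) / z⁴ dz converges and equals (π/6) [ (3a₂ − a₁) a₁ |a₁| + (3a₁ − a₂) a₂ |a₂| + (a₁ − a₂)² |a₁ − a₂| ]. In particular M(1,1) = 2π/3. -/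
open MeasureTheory

open Set

lemma key_prim (a z : ℝ) (hz : z ≠ 0) :
    ∫ t in (0:ℝ)..a, ((a : ℂ) - t) * Complex.exp (Complex.I * t * z) =
      -(Complex.exp (Complex.I * a * z) - 1 - Complex.I * a * z) / (z : ℂ) ^ 2 := by
  have hw : (Complex.I * z) ≠ 0 := by
    simp [Complex.I_ne_zero, Complex.ofReal_eq_zero, hz]
  set w : ℂ := Complex.I * z with hwdef
  have hF : ∀ t ∈ Set.uIcc (0:ℝ) a, HasDerivAt
      (fun t : ℝ => Complex.exp (w * t) * (((a : ℂ) - t) / w + 1 / w ^ 2))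
      (((a : ℂ) - t) * Complex.exp (Complex.I * t * z)) t := by
    intro t _
    have h1 : HasDerivAt (fun t : ℝ => Complex.exp (w * t)) (w * Complex.exp (w * t)) t := by
      have := ((Complex.hasDerivAt_exp (w * t)).comp (t:ℂ)
        ((hasDerivAt_id (t:ℂ)).const_mul w)).comp_ofReal
      simpa [mul_comm] using this
    have h2 : HasDerivAt (fun t : ℝ => ((a : ℂ) - t) / w + 1 / w ^ 2) (-(1/w)) t := by
      have : HasDerivAt (fun t : ℝ => ((a : ℂ) - t)) (-1) t := by
        simpa using ((hasDerivAt_id t).const_sub a).ofReal_comp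
      have h3 := (this.div_const w).add_const (1 / w ^ 2)
      exact h3.congr_deriv (by ring)
    have := h1.mul h2
    refine this.congr_deriv ?_
    rw [show Complex.I * (t:ℂ) * z = w * t by rw [hwdef]; ring]
    field_simp [hwdef]
    ring
  have hcont : ContinuousOn (fun t : ℝ => ((a : ℂ) - t) * Complex.exp (Complex.I * t * z))
      (Set.uIcc (0:ℝ) a) := by
    fun_prop
  have := intervalIntegral.integral_eq_sub_of_hasDerivAt hF (hcont.intervalIntegrable)
  have hzc : (z:ℂ) ≠ 0 := Complex.ofReal_ne_zero.2 hz
  have e1 : Complex.I * (a:ℂ) * z = w * a := by rw [hwdef]; ring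
  have hw2 : w ^ 2 = -(z:ℂ) ^ 2 := by
    rw [hwdef]; rw [mul_pow]; rw [Complex.I_sq]; ring
  rw [this, e1]
  clear_value w
  simp only [Complex.ofReal_zero, mul_zero, Complex.exp_zero, sub_self, zero_div, zero_add, sub_zero]
  rw [show (z:ℂ) ^ 2 = -w ^ 2 by linear_combination hw2]
  field_simp
  ring

noncomputable def gg (a : ℝ) : ℝ → ℂ := fun t =>
  (Set.Ioc (0:ℝ) a).indicator (fun t : ℝ => (a : ℂ) - t) t
  - (Set.Ioc a (0:ℝ)).indicator (fun t : ℝ => (a : ℂ) - t) t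

lemma gg_meas (a : ℝ) : Measurable (gg a) := by
  unfold gg
  exact ((measurable_const.sub Complex.measurable_ofReal).indicator measurableSet_Ioc).sub
    ((measurable_const.sub Complex.measurable_ofReal).indicator measurableSet_Ioc)

lemma gg_norm_le (a : ℝ) (t : ℝ) : ‖gg a t‖ ≤ |a| := by
  unfold gg
  rcases le_or_gt 0 a with h | h
  · rw [Set.Ioc_eq_empty_of_le h, Set.indicator_empty, sub_zero]
    by_cases ht : t ∈ Set.Ioc (0:ℝ) a
    · rw [Set.indicator_of_mem ht]
      rw [show ((a:ℂ) - t) = ((a - t : ℝ) : ℂ) by push_cast; ring, Complex.norm_real, Real.norm_eq_abs]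
      rw [abs_of_nonneg h]
      rw [abs_of_nonneg (by linarith [ht.2])]
      linarith [ht.1]
    · rw [Set.indicator_of_notMem ht]; simp [abs_nonneg]
  · rw [Set.Ioc_eq_empty_of_le h.le, Set.indicator_empty, zero_sub, norm_neg]
    by_cases ht : t ∈ Set.Ioc a (0:ℝ)
    · rw [Set.indicator_of_mem ht]
      rw [show ((a:ℂ) - t) = ((a - t : ℝ) : ℂ) by push_cast; ring, Complex.norm_real, Real.norm_eq_abs]
      rw [abs_of_neg h, abs_of_nonpos (by linarith [ht.1])]
      linarith [ht.2]
    · rw [Set.indicator_of_notMem ht]; simp [abs_nonneg]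

lemma gg_supp (a : ℝ) (t : ℝ) (ht : |a| < |t|) : gg a t = 0 := by
  unfold gg
  have h1 : t ∉ Set.Ioc (0:ℝ) a := by
    intro h; rw [abs_of_pos h.1] at ht
    have := h.2; have := le_abs_self a; linarith
  have h2 : t ∉ Set.Ioc a (0:ℝ) := by
    intro h; rw [abs_of_nonpos h.2] at ht
    have := h.1; have := neg_abs_le a; linarith
  rw [Set.indicator_of_notMem h1, Set.indicator_of_notMem h2, sub_zero]

lemma gg_integrable (a : ℝ) : Integrable (gg a) := by
  unfold gg
  apply Integrable.sub
  · rw [integrable_indicator_iff measurableSet_Ioc]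
    apply Continuous.integrableOn_Ioc; fun_prop
  · rw [integrable_indicator_iff measurableSet_Ioc]
    apply Continuous.integrableOn_Ioc; fun_prop

/-- integral of gg against a continuous function equals interval integral -/
lemma gg_integral_mul (a : ℝ) (F : ℝ → ℂ) (hF : Continuous F) :
    ∫ t, gg a t * F t = ∫ t in (0:ℝ)..a, ((a : ℂ) - t) * F t := by
  have e1 : ∀ s : Set ℝ, (fun t => (s.indicator (fun t : ℝ => (a:ℂ) - t) t) * F t)
      = s.indicator (fun t => ((a:ℂ) - t) * F t) := by
    intro s; ext t; by_cases h : t ∈ s <;> simp [h]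
  have i1 : ∀ b c : ℝ, Integrable ((Set.Ioc b c).indicator (fun t => ((a:ℂ) - t) * F t)) := by
    intro b c
    rw [integrable_indicator_iff measurableSet_Ioc]
    apply Continuous.integrableOn_Ioc; fun_prop
  rw [intervalIntegral]
  unfold gg
  simp_rw [sub_mul]
  rw [integral_sub]
  · rw [show (fun t => (Set.Ioc (0:ℝ) a).indicator (fun t : ℝ => (a:ℂ) - t) t * F t) = _ from e1 _,
       show (fun t => (Set.Ioc a (0:ℝ)).indicator (fun t : ℝ => (a:ℂ) - t) t * F t) = _ from e1 _,
       integral_indicator measurableSet_Ioc, integral_indicator measurableSet_Ioc]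
    simp_rw [sub_mul]
  · rw [show (fun t => (Set.Ioc (0:ℝ) a).indicator (fun t : ℝ => (a:ℂ) - t) t * F t) = _ from e1 _]
    exact i1 0 a
  · rw [show (fun t => (Set.Ioc a (0:ℝ)).indicator (fun t : ℝ => (a:ℂ) - t) t * F t) = _ from e1 _]
    exact i1 a 0

noncomputable def hh (a₁ a₂ : ℝ) : ℝ → ℂ := fun u => ∫ t, gg a₁ (u + t) * gg a₂ t

lemma exp_norm_one (s z : ℝ) : ‖Complex.exp (Complex.I * s * z)‖ ≤ 1 := by
  rw [show Complex.I * s * z = ((s * z : ℝ) : ℂ) * Complex.I by push_cast; ring]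
  rw [Complex.norm_exp_ofReal_mul_I]

lemma gg_mul_exp_integrable (a z : ℝ) :
    Integrable (fun s => gg a s * Complex.exp (Complex.I * s * z)) := by
  have h : Integrable (fun s : ℝ => Complex.exp (Complex.I * s * z) * gg a s) := by
    apply (gg_integrable a).bdd_mul (c := 1)
    · apply Measurable.aestronglyMeasurable; fun_prop
    · exact ae_of_all _ (fun s => exp_norm_one s z)
  simpa [mul_comm] using h

lemma prod_integrable (a₁ a₂ z : ℝ) :
    Integrable (Function.uncurry fun u t =>
      gg a₁ (u + t) * gg a₂ t * Complex.exp (Complex.I * u * z)) (volume.prod volume) := by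
  have hT : MeasurePreserving (fun p : ℝ × ℝ => (p.1 + p.2, p.2))
      ((volume : Measure ℝ).prod volume) ((volume : Measure ℝ).prod volume) :=
    measurePreserving_add_prod volume volume
  have hF : Integrable (fun p : ℝ × ℝ =>
      (gg a₁ p.1 * Complex.exp (Complex.I * p.1 * z)) *
      (gg a₂ p.2 * Complex.exp (-(Complex.I * p.2 * z)))) (volume.prod volume) := by
    have h2 : Integrable (fun t : ℝ => gg a₂ t * Complex.exp (-(Complex.I * t * z))) := by
      simpa [neg_mul, mul_neg] using gg_mul_exp_integrable a₂ (-z)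
    exact Integrable.mul_prod (f := fun s : ℝ => gg a₁ s * Complex.exp (Complex.I * s * z))
      (g := fun t : ℝ => gg a₂ t * Complex.exp (-(Complex.I * t * z)))
      (gg_mul_exp_integrable a₁ z) h2
  have := (hT.integrable_comp hF.aestronglyMeasurable).2 hF
  apply this.congr
  filter_upwards with p
  obtain ⟨u, t⟩ := p
  simp only [Function.comp_apply, Function.uncurry_apply_pair]
  rw [show gg a₁ (u + t) * Complex.exp (Complex.I * (↑(u + t) : ℂ) * z) *
      (gg a₂ t * Complex.exp (-(Complex.I * t * z)))
      = gg a₁ (u + t) * gg a₂ t *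
        (Complex.exp (Complex.I * (↑(u + t) : ℂ) * z) * Complex.exp (-(Complex.I * t * z))) by ring,
    ← Complex.exp_add]
  congr 2
  push_cast
  ring

lemma hh_fourier (a₁ a₂ z : ℝ) :
    ∫ u, hh a₁ a₂ u * Complex.exp (Complex.I * u * z) =
      (∫ t in (0:ℝ)..a₁, ((a₁ : ℂ) - t) * Complex.exp (Complex.I * t * z)) *
      (∫ t in (0:ℝ)..a₂, ((a₂ : ℂ) - t) * Complex.exp (-(Complex.I * t * z))) := by
  have step1 : ∫ u, hh a₁ a₂ u * Complex.exp (Complex.I * u * z)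
      = ∫ u, ∫ t, gg a₁ (u + t) * gg a₂ t * Complex.exp (Complex.I * u * z) := by
    unfold hh
    congr 1; ext u
    rw [← integral_mul_const]
  rw [step1, integral_integral_swap (prod_integrable a₁ a₂ z)]
  have inner : ∀ t : ℝ, (∫ u, gg a₁ (u + t) * gg a₂ t * Complex.exp (Complex.I * u * z))
      = (∫ s, gg a₁ s * Complex.exp (Complex.I * s * z)) *
        (gg a₂ t * Complex.exp (-(Complex.I * t * z))) := by
    intro t
    have e : ∀ u : ℝ, gg a₁ (u + t) * gg a₂ t * Complex.exp (Complex.I * u * z)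
        = (gg a₁ (u + t) * Complex.exp (Complex.I * (u + t) * z)) *
          (gg a₂ t * Complex.exp (-(Complex.I * t * z))) := by
      intro u
      rw [show Complex.I * (↑u + ↑t) * z = Complex.I * u * z + Complex.I * t * z by push_cast; ring,
        Complex.exp_add]
      rw [show -(Complex.I * t * z) = -(Complex.I * t * z) from rfl, Complex.exp_neg]
      field_simp
    simp_rw [e]
    rw [integral_mul_const]
    congr 1
    have := MeasureTheory.integral_add_right_eq_self (μ := volume)
      (fun s => gg a₁ s * Complex.exp (Complex.I * s * z)) t
    beta_reduce at this
    rw [← this]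
    congr 1; ext u
    push_cast
    ring_nf
  simp_rw [inner]
  rw [integral_const_mul, gg_integral_mul a₁ _ (by fun_prop), gg_integral_mul a₂ _ (by fun_prop)]

lemma gg_contAt (a : ℝ) {s : ℝ} (h0 : s ≠ 0) (ha : s ≠ a) : ContinuousAt (gg a) s := by
  have heq : ∀ (U : Set ℝ), IsOpen U → s ∈ U → ∀ (G : ℝ → ℂ), Continuous G →
      (∀ x ∈ U, gg a x = G x) → ContinuousAt (gg a) s := by
    intro U hU hsU G hG hGx
    apply hG.continuousAt.congr
    filter_upwards [hU.mem_nhds hsU] with x hx using (hGx x hx).symm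
  rcases lt_trichotomy s 0 with hs | hs | hs
  · rcases lt_or_ge a s with h | h
    · -- a < s < 0
      apply heq (Set.Ioo a 0) isOpen_Ioo ⟨h, hs⟩ (fun x => -((a : ℂ) - x)) (by fun_prop)
      intro x hx
      unfold gg
      have hm : x ∈ Set.Ioc a 0 := ⟨hx.1, hx.2.le⟩
      have hn : x ∉ Set.Ioc (0:ℝ) a := by intro hc; exact absurd hc.1 (by linarith [hx.2])
      rw [Set.indicator_of_mem hm, Set.indicator_of_notMem hn]
      ring
    · -- s < a, s < 0 : s < min a 0
      have h' : s < a := lt_of_le_of_ne h ha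
      apply heq (Set.Iio (min a 0)) isOpen_Iio (by simp [lt_min_iff]; exact ⟨h', hs⟩)
        (fun _ => 0) continuous_const
      intro x hx
      simp only [Set.mem_Iio, lt_min_iff] at hx
      unfold gg
      rw [Set.indicator_of_notMem (by intro hc; exact absurd hc.1 (by linarith [hx.2]) : x ∉ Set.Ioc (0:ℝ) a),
        Set.indicator_of_notMem (by intro hc; exact absurd hc.1 (by linarith [hx.1]) : x ∉ Set.Ioc a (0:ℝ))]
      ring
  · exact absurd hs h0
  · rcases lt_or_ge s a with h | h
    · -- 0 < s < a
      apply heq (Set.Ioo 0 a) isOpen_Ioo ⟨hs, h⟩ (fun x => (a : ℂ) - x) (by fun_prop)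
      intro x hx
      unfold gg
      have hm : x ∈ Set.Ioc (0:ℝ) a := ⟨hx.1, hx.2.le⟩
      have hn : x ∉ Set.Ioc a (0:ℝ) := by intro hc; exact absurd hc.2 (by push_neg; linarith [hx.1])
      rw [Set.indicator_of_mem hm, Set.indicator_of_notMem hn]
      ring
    · -- a < s (since s ≠ a), 0 < s : s > max a 0
      have h' : a < s := lt_of_le_of_ne h (Ne.symm ha)
      apply heq (Set.Ioi (max a 0)) isOpen_Ioi (by simp [max_lt_iff]; exact ⟨h', hs⟩)
        (fun _ => 0) continuous_const
      intro x hx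
      simp only [Set.mem_Ioi, max_lt_iff] at hx
      unfold gg
      rw [Set.indicator_of_notMem (by intro hc; exact absurd hc.2 (by push_neg; linarith [hx.1]) : x ∉ Set.Ioc (0:ℝ) a),
        Set.indicator_of_notMem (by intro hc; exact absurd hc.2 (by push_neg; linarith [hx.2]) : x ∉ Set.Ioc a (0:ℝ))]
      ring

lemma ae_ne_real (c : ℝ) : ∀ᵐ t : ℝ, t ≠ c := by
  rw [ae_iff]
  convert Real.volume_singleton (a := c) using 2
  ext x; simp

lemma hh_cont (a₁ a₂ : ℝ) : Continuous (hh a₁ a₂) := by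
  rw [continuous_iff_continuousAt]
  intro u₀
  apply continuousAt_of_dominated (bound := fun t => |a₁| * ‖gg a₂ t‖)
  · filter_upwards with u
    exact (((gg_meas a₁).comp (by fun_prop)).mul (gg_meas a₂)).aestronglyMeasurable
  · filter_upwards with u
    filter_upwards with t
    rw [norm_mul]
    exact mul_le_mul_of_nonneg_right (gg_norm_le _ _) (norm_nonneg _)
  · exact (gg_integrable a₂).norm.const_mul _
  · filter_upwards [ae_ne_real (-u₀), ae_ne_real (a₁ - u₀)] with t h1 h2
    have c1 : u₀ + t ≠ 0 := by intro h; apply h1; linarith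
    have c2 : u₀ + t ≠ a₁ := by intro h; apply h2; linarith
    have cadd : ContinuousAt (fun u : ℝ => u + t) u₀ := by fun_prop
    exact ContinuousAt.mul (ContinuousAt.comp (x := u₀) (g := gg a₁)
      (f := fun u : ℝ => u + t) (gg_contAt a₁ c1 c2) cadd) continuousAt_const

lemma hh_zero (a₁ a₂ : ℝ) {u : ℝ} (hu : |a₁| + |a₂| < |u|) : hh a₁ a₂ u = 0 := by
  unfold hh
  have h : ∀ t : ℝ, gg a₁ (u + t) * gg a₂ t = 0 := by
    intro t
    rcases lt_or_ge (|a₂|) (|t|) with h | h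
    · rw [gg_supp a₂ t h, mul_zero]
    · have : |a₁| < |u + t| := by
        have h3 : |u| - |t| ≤ |u + t| := by
          have := abs_add_le (u + t) (-t)
          simp at this
          linarith [this]
        linarith
      rw [gg_supp a₁ _ this, zero_mul]
  simp [h]

lemma hh_hcs (a₁ a₂ : ℝ) : HasCompactSupport (hh a₁ a₂) := by
  apply HasCompactSupport.intro (isCompact_Icc (a := -(|a₁| + |a₂| + 1)) (b := |a₁| + |a₂| + 1))
  intro x hx
  simp only [Set.mem_Icc, not_and_or, not_le] at hx
  apply hh_zero
  rcases hx with h | h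
  · calc |a₁| + |a₂| < -x := by linarith
      _ ≤ |x| := neg_le_abs x
  · calc |a₁| + |a₂| < x := by linarith
      _ ≤ |x| := le_abs_self x

lemma hh_integrable (a₁ a₂ : ℝ) : Integrable (hh a₁ a₂) :=
  (hh_cont a₁ a₂).integrable_of_hasCompactSupport (hh_hcs a₁ a₂)

noncomputable def phi (a₁ a₂ : ℝ) : ℝ → ℂ := fun z =>
  if z = 0 then ((a₁ ^ 2 * a₂ ^ 2 / 4 : ℝ) : ℂ)
  else (Complex.exp (Complex.I * a₁ * z) - 1 - Complex.I * a₁ * z) *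
    (Complex.exp (-Complex.I * a₂ * z) - 1 + Complex.I * a₂ * z) / (z : ℂ) ^ 4

lemma int_zero (a : ℝ) : (∫ t in (0:ℝ)..a, ((a : ℂ) - t)) = ((a ^ 2 / 2 : ℝ) : ℂ) := by
  have h : ∀ t ∈ Set.uIcc (0:ℝ) a, HasDerivAt (fun t : ℝ => ((a * t - t ^ 2 / 2 : ℝ) : ℂ))
      ((a : ℂ) - t) t := by
    intro t _
    have h0 : HasDerivAt (fun t : ℝ => a * t - t ^ 2 / 2) (a - t) t := by
      have := ((hasDerivAt_id t).const_mul a).sub ((hasDerivAt_pow 2 t).div_const 2)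
      exact this.congr_deriv (by ring)
    have := h0.ofReal_comp
    simpa using this
  have hc : ContinuousOn (fun t : ℝ => (a : ℂ) - t) (Set.uIcc 0 a) := by fun_prop
  rw [intervalIntegral.integral_eq_sub_of_hasDerivAt h hc.intervalIntegrable]
  push_cast
  ring

lemma second_factor (a₂ z : ℝ) (hz : z ≠ 0) :
    (∫ t in (0:ℝ)..a₂, ((a₂ : ℂ) - t) * Complex.exp (-(Complex.I * t * z))) =
      -(Complex.exp (-Complex.I * a₂ * z) - 1 + Complex.I * a₂ * z) / (z : ℂ) ^ 2 := by
  have k2 := key_prim a₂ (-z) (neg_ne_zero.mpr hz)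
  simp_rw [Complex.ofReal_neg, mul_neg, ← neg_mul] at k2
  rw [show (fun t : ℝ => ((a₂:ℂ) - t) * Complex.exp (-(Complex.I * t * z)))
    = (fun t : ℝ => ((a₂:ℂ) - t) * Complex.exp (-Complex.I * t * z)) from by
      ext t; rw [neg_mul, neg_mul], k2]
  ring

lemma phi_eq (a₁ a₂ z : ℝ) :
    phi a₁ a₂ z = ∫ u, hh a₁ a₂ u * Complex.exp (Complex.I * u * z) := by
  rw [hh_fourier]
  by_cases hz : z = 0
  · subst hz
    unfold phi
    simp only [if_pos rfl, Complex.ofReal_zero, mul_zero, Complex.exp_zero, neg_zero, mul_one]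
    rw [int_zero, int_zero]
    push_cast
    ring
  · unfold phi
    rw [if_neg hz, key_prim a₁ z hz, second_factor a₂ z hz]
    have hzc : (z : ℂ) ≠ 0 := Complex.ofReal_ne_zero.2 hz
    field_simp

lemma normA (a z : ℝ) : ‖Complex.exp (Complex.I * a * z) - 1 - Complex.I * a * z‖ ≤
    min (z ^ 2 * a ^ 2) (2 + |a| * |z|) := by
  apply le_min
  · by_cases hz : z = 0
    · subst hz; simp
    · have k := key_prim a z hz
      have hA : Complex.exp (Complex.I * a * z) - 1 - Complex.I * a * z
          = -(z:ℂ)^2 * ∫ t in (0:ℝ)..a, ((a : ℂ) - t) * Complex.exp (Complex.I * t * z) := by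
        rw [k]
        have hzc : (z:ℂ) ≠ 0 := Complex.ofReal_ne_zero.2 hz
        field_simp
      rw [hA, norm_mul]
      have h1 : ‖-(z:ℂ)^2‖ = z^2 := by
        rw [norm_neg, norm_pow, Complex.norm_real, Real.norm_eq_abs, sq_abs]
      rw [h1]
      have h2 : ‖∫ t in (0:ℝ)..a, ((a : ℂ) - t) * Complex.exp (Complex.I * t * z)‖
          ≤ |a| * |a - 0| := by
        apply intervalIntegral.norm_integral_le_of_norm_le_const
        intro x hx
        rw [norm_mul]
        have e1 : ‖(a:ℂ) - x‖ ≤ |a| := by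
          rw [show ((a:ℂ) - x) = ((a - x : ℝ) : ℂ) by push_cast; ring, Complex.norm_real,
            Real.norm_eq_abs]
          rw [Set.uIoc_eq_union] at hx
          rcases hx with h | h
          · rw [abs_of_nonneg (by linarith [h.2]), abs_of_nonneg (by linarith [h.1, h.2])]
            linarith [h.1]
          · rw [abs_of_nonpos (by linarith [h.1]), abs_of_nonpos (by linarith [h.1, h.2])]
            linarith [h.1, h.2]
        calc ‖(a:ℂ) - x‖ * ‖Complex.exp (Complex.I * x * z)‖ ≤ |a| * 1 :=
              mul_le_mul e1 (exp_norm_one x z) (norm_nonneg _) (abs_nonneg a)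
          _ = |a| := mul_one _
      rw [sub_zero] at h2
      calc z ^ 2 * ‖_‖ ≤ z ^ 2 * (|a| * |a|) := by
            exact mul_le_mul_of_nonneg_left h2 (sq_nonneg z)
        _ = z ^ 2 * a ^ 2 := by rw [abs_mul_abs_self]; ring
  · calc ‖Complex.exp (Complex.I * a * z) - 1 - Complex.I * a * z‖
        ≤ ‖Complex.exp (Complex.I * a * z) - 1‖ + ‖Complex.I * a * z‖ := norm_sub_le _ _
      _ ≤ (‖Complex.exp (Complex.I * a * z)‖ + ‖(1:ℂ)‖) + ‖Complex.I * a * z‖ := by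
          exact add_le_add_left (norm_sub_le _ _) _
      _ ≤ (1 + 1) + |a| * |z| := by
          apply add_le_add (add_le_add (exp_norm_one a z) (by norm_num))
          rw [norm_mul, norm_mul, Complex.norm_I, one_mul, Complex.norm_real, Complex.norm_real,
            Real.norm_eq_abs, Real.norm_eq_abs]
      _ = 2 + |a| * |z| := by norm_num

lemma normB (a z : ℝ) : ‖Complex.exp (-Complex.I * a * z) - 1 + Complex.I * a * z‖ ≤
    min (z ^ 2 * a ^ 2) (2 + |a| * |z|) := by
  have h := normA a (-z)
  have e : Complex.exp (Complex.I * a * (-z:ℝ)) - 1 - Complex.I * a * (-z:ℝ)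
      = Complex.exp (-Complex.I * a * z) - 1 + Complex.I * a * z := by
    push_cast
    rw [show Complex.I * a * -(z:ℂ) = -Complex.I * a * z by ring]
    ring
  rw [e] at h
  simpa using h

lemma phi_norm_le (a₁ a₂ : ℝ) (z : ℝ) :
    ‖phi a₁ a₂ z‖ ≤ (2 * (a₁^2 * a₂^2) + 2 * ((2 + |a₁|) * (2 + |a₂|))) * (1 + z^2)⁻¹ := by
  have hpos : (0:ℝ) < 1 + z^2 := by positivity
  rcases le_or_gt (|z|) 1 with hz1 | hz1
  · -- small z: ‖phi‖ ≤ a₁² a₂²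
    have hb : ‖phi a₁ a₂ z‖ ≤ a₁^2 * a₂^2 := by
      unfold phi
      by_cases hz : z = 0
      · subst hz
        rw [if_pos rfl, Complex.norm_real, Real.norm_eq_abs]
        rw [abs_of_nonneg (by positivity)]
        nlinarith [sq_nonneg a₁, sq_nonneg a₂, sq_nonneg (a₁*a₂)]
      · rw [if_neg hz, norm_div, norm_mul, norm_pow, Complex.norm_real, Real.norm_eq_abs]
        have h1 := (normA a₁ z).trans (min_le_left _ _)
        have h2 := (normB a₂ z).trans (min_le_left _ _)
        have hz4 : (0:ℝ) < |z|^4 := by positivity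
        rw [div_le_iff₀ hz4]
        calc ‖_‖ * ‖_‖ ≤ (z^2*a₁^2) * (z^2*a₂^2) := by
              apply mul_le_mul h1 h2 (norm_nonneg _) (by positivity)
          _ = a₁^2*a₂^2 * |z|^4 := by rw [← sq_abs z]; ring
    have h2 : 1 + z^2 ≤ 2 := by nlinarith [sq_abs z, abs_nonneg z]
    have hX : (0:ℝ) ≤ a₁^2*a₂^2 := by positivity
    have hC : (0:ℝ) ≤ (2 + |a₁|) * (2 + |a₂|) := by positivity
    calc ‖phi a₁ a₂ z‖ ≤ a₁^2*a₂^2 := hb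
      _ ≤ (2 * (a₁^2 * a₂^2) + 2 * ((2 + |a₁|) * (2 + |a₂|))) * (1 + z^2)⁻¹ := by
          rw [← div_eq_mul_inv, le_div_iff₀ hpos]
          nlinarith
  · -- large z
    have hz : z ≠ 0 := by intro h; rw [h] at hz1; simp at hz1; linarith
    have hb : ‖phi a₁ a₂ z‖ ≤ ((2 + |a₁|) * (2 + |a₂|)) / z^2 := by
      unfold phi
      rw [if_neg hz, norm_div, norm_mul, norm_pow, Complex.norm_real, Real.norm_eq_abs]
      have h1 := (normA a₁ z).trans (min_le_right _ _)
      have h2 := (normB a₂ z).trans (min_le_right _ _)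
      have hz4 : (0:ℝ) < |z|^4 := by positivity
      rw [div_le_div_iff₀ hz4 (by positivity : (0:ℝ) < z^2)]
      have e1 : 2 + |a₁| * |z| ≤ (2 + |a₁|) * |z| := by nlinarith [abs_nonneg a₁]
      have e2 : 2 + |a₂| * |z| ≤ (2 + |a₂|) * |z| := by nlinarith [abs_nonneg a₂]
      calc ‖_‖ * ‖_‖ * z^2 ≤ ((2 + |a₁| * |z|) * (2 + |a₂| * |z|)) * z^2 := by
            apply mul_le_mul_of_nonneg_right _ (sq_nonneg z)
            exact mul_le_mul h1 h2 (norm_nonneg _) (by positivity)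
        _ ≤ (((2 + |a₁|)*|z|) * ((2 + |a₂|)*|z|)) * z^2 := by
            apply mul_le_mul_of_nonneg_right _ (sq_nonneg z)
            apply mul_le_mul e1 e2 (by positivity) (by positivity)
        _ = ((2 + |a₁|) * (2 + |a₂|)) * (|z|^2 * z^2) := by ring
        _ ≤ ((2 + |a₁|) * (2 + |a₂|)) * |z|^4 := by
            rw [← sq_abs z]; apply le_of_eq; ring
    have hX : (0:ℝ) ≤ a₁^2*a₂^2 := by positivity
    have hC : (0:ℝ) ≤ (2 + |a₁|) * (2 + |a₂|) := by positivity
    have hz2 : 1 < z^2 := by nlinarith [sq_abs z]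
    calc ‖phi a₁ a₂ z‖ ≤ ((2 + |a₁|) * (2 + |a₂|)) / z^2 := hb
      _ ≤ (2 * (a₁^2 * a₂^2) + 2 * ((2 + |a₁|) * (2 + |a₂|))) * (1 + z^2)⁻¹ := by
          rw [← div_eq_mul_inv, div_le_div_iff₀ (by linarith) hpos]
          nlinarith

lemma phi_meas (a₁ a₂ : ℝ) : AEStronglyMeasurable (phi a₁ a₂) volume := by
  unfold phi
  apply Measurable.aestronglyMeasurable
  apply Measurable.ite ((MeasurableSet.singleton (0:ℝ) : MeasurableSet {z : ℝ | z = 0}))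
  · exact measurable_const
  · fun_prop

lemma phi_integrable (a₁ a₂ : ℝ) : Integrable (phi a₁ a₂) := by
  apply Integrable.mono' ((integrable_inv_one_add_sq).const_mul
    (2 * (a₁^2 * a₂^2) + 2 * ((2 + |a₁|) * (2 + |a₂|)))) (phi_meas a₁ a₂)
  filter_upwards with z
  exact phi_norm_le a₁ a₂ z

open FourierTransform in
lemma fourier_hh (a₁ a₂ ξ : ℝ) : 𝓕 (hh a₁ a₂) ξ = phi a₁ a₂ (-(2 * Real.pi) * ξ) := by
  rw [Real.fourier_eq', phi_eq]
  congr 1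
  ext u
  rw [smul_eq_mul, mul_comm]
  congr 1
  simp only [RCLike.inner_apply, starRingEnd_apply, star_trivial]
  push_cast
  ring

open FourierTransform in
lemma integral_phi (a₁ a₂ : ℝ) : ∫ z, phi a₁ a₂ z = (2 * Real.pi) • hh a₁ a₂ 0 := by
  have hF : Integrable (𝓕 (hh a₁ a₂)) := by
    have : 𝓕 (hh a₁ a₂) = fun ξ => phi a₁ a₂ ((-(2 * Real.pi)) * ξ) := by
      ext ξ; exact fourier_hh a₁ a₂ ξ
    rw [this]
    have hne : (-(2 * Real.pi)) ≠ 0 := by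
      have := Real.pi_pos; intro h; nlinarith
    exact (integrable_comp_mul_left_iff (phi a₁ a₂) hne).2 (phi_integrable a₁ a₂)
  have inv := (hh_integrable a₁ a₂).fourierInv_fourier_eq hF ((hh_cont a₁ a₂).continuousAt (x := 0))
  have lhs : 𝓕⁻ (𝓕 (hh a₁ a₂)) 0 = ∫ ξ, 𝓕 (hh a₁ a₂) ξ := by
    rw [Real.fourierInv_eq]
    simp
  rw [lhs] at inv
  have e2 : ∫ ξ, 𝓕 (hh a₁ a₂) ξ = ∫ ξ, phi a₁ a₂ ((-(2 * Real.pi)) * ξ) := by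
    congr 1; ext ξ; exact fourier_hh a₁ a₂ ξ
  have e3 := MeasureTheory.Measure.integral_comp_mul_left (phi a₁ a₂) (-(2 * Real.pi))
  rw [e2, e3] at inv
  rw [← inv]
  have : |(-(2 * Real.pi))⁻¹| = (2 * Real.pi)⁻¹ := by
    rw [abs_inv, abs_neg, abs_of_pos (by positivity)]
  rw [this, smul_smul]
  rw [mul_inv_cancel₀ (by positivity : (2 * Real.pi) ≠ 0), one_smul]

lemma quad_int (b c p q : ℝ) (h : p ≤ q) :
    ∫ t in Set.Ioc p q, ((b - t) * (c - t)) =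
      (b*c*q - (b+c)*(q^2/2) + q^3/3) - (b*c*p - (b+c)*(p^2/2) + p^3/3) := by
  rw [← intervalIntegral.integral_of_le h]
  apply intervalIntegral.integral_eq_sub_of_hasDerivAt
  · intro t _
    have h := (((hasDerivAt_id t).const_mul (b*c)).sub
      (((hasDerivAt_pow 2 t).div_const 2).const_mul (b+c))).add ((hasDerivAt_pow 3 t).div_const 3)
    exact h.congr_deriv (by simp; ring)
  · apply Continuous.intervalIntegrable; fun_prop

lemma val_nonneg {a₁ a₂ : ℝ} (h1 : 0 ≤ a₁) (h2 : a₁ ≤ a₂) :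
    ∫ t, gg a₁ t * gg a₂ t = ((a₁^2*a₂/2 - a₁^3/6 : ℝ) : ℂ) := by
  have e : ∀ t : ℝ, gg a₁ t * gg a₂ t
      = (Set.Ioc (0:ℝ) a₁).indicator (fun t => (((a₁ - t) * (a₂ - t) : ℝ) : ℂ)) t := by
    intro t
    unfold gg
    rw [Set.Ioc_eq_empty (by push_neg; linarith : ¬ a₁ < (0:ℝ)),
        Set.Ioc_eq_empty (by push_neg; linarith : ¬ a₂ < (0:ℝ))]
    simp only [Set.indicator_empty, sub_zero]
    by_cases ht : t ∈ Set.Ioc (0:ℝ) a₁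
    · have ht2 : t ∈ Set.Ioc (0:ℝ) a₂ := ⟨ht.1, ht.2.trans h2⟩
      rw [Set.indicator_of_mem ht, Set.indicator_of_mem ht2, Set.indicator_of_mem ht]
      push_cast
      ring
    · rw [Set.indicator_of_notMem ht, Set.indicator_of_notMem ht, zero_mul]
  simp_rw [e]
  rw [integral_indicator measurableSet_Ioc,
    show (∫ x in Set.Ioc (0:ℝ) a₁, (((a₁ - x) * (a₂ - x) : ℝ) : ℂ))
      = (((∫ x in Set.Ioc (0:ℝ) a₁, (a₁ - x) * (a₂ - x)) : ℝ) : ℂ) from integral_ofReal,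
    quad_int a₁ a₂ 0 a₁ h1]
  congr 1
  ring

lemma val_nonpos {a₁ a₂ : ℝ} (h1 : a₁ ≤ a₂) (h2 : a₂ ≤ 0) :
    ∫ t, gg a₁ t * gg a₂ t = ((-(a₁*a₂^2)/2 + a₂^3/6 : ℝ) : ℂ) := by
  have e : ∀ t : ℝ, gg a₁ t * gg a₂ t
      = (Set.Ioc a₂ (0:ℝ)).indicator (fun t => (((a₁ - t) * (a₂ - t) : ℝ) : ℂ)) t := by
    intro t
    unfold gg
    rw [Set.Ioc_eq_empty (by push_neg; linarith : ¬ (0:ℝ) < a₁),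
        Set.Ioc_eq_empty (by push_neg; linarith : ¬ (0:ℝ) < a₂)]
    simp only [Set.indicator_empty, zero_sub]
    by_cases ht : t ∈ Set.Ioc a₂ (0:ℝ)
    · have ht2 : t ∈ Set.Ioc a₁ (0:ℝ) := ⟨lt_of_le_of_lt h1 ht.1, ht.2⟩
      rw [Set.indicator_of_mem ht, Set.indicator_of_mem ht2, Set.indicator_of_mem ht]
      push_cast
      ring
    · rw [Set.indicator_of_notMem ht, Set.indicator_of_notMem ht]
      simp
  simp_rw [e]
  rw [integral_indicator measurableSet_Ioc,
    show (∫ x in Set.Ioc a₂ (0:ℝ), (((a₁ - x) * (a₂ - x) : ℝ) : ℂ))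
      = (((∫ x in Set.Ioc a₂ (0:ℝ), (a₁ - x) * (a₂ - x)) : ℝ) : ℂ) from integral_ofReal,
    quad_int a₁ a₂ a₂ 0 h2]
  congr 1
  ring

lemma val_mixed {a₁ a₂ : ℝ} (h1 : a₁ ≤ 0) (h2 : 0 ≤ a₂) :
    ∫ t, gg a₁ t * gg a₂ t = 0 := by
  have e : ∀ t : ℝ, gg a₁ t * gg a₂ t = 0 := by
    intro t
    unfold gg
    rw [Set.Ioc_eq_empty (by push_neg; linarith : ¬ (0:ℝ) < a₁),
        Set.Ioc_eq_empty (by push_neg; linarith : ¬ a₂ < (0:ℝ))]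
    simp only [Set.indicator_empty, zero_sub, sub_zero]
    by_cases ht : t ≤ 0
    · rw [Set.indicator_of_notMem (fun hc => absurd hc.1 (not_lt.2 ht) : t ∉ Set.Ioc (0:ℝ) a₂),
        mul_zero]
    · rw [Set.indicator_of_notMem
        (fun hc => absurd hc.2 ht : t ∉ Set.Ioc a₁ (0:ℝ))]
      simp
  simp_rw [e]
  simp

lemma val_swap (a₁ a₂ : ℝ) : ∫ t, gg a₁ t * gg a₂ t = ∫ t, gg a₂ t * gg a₁ t := by
  simp_rw [mul_comm]

lemma hh0 (a₁ a₂ : ℝ) : hh a₁ a₂ 0 = ∫ t, gg a₁ t * gg a₂ t := by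
  unfold hh
  simp only [zero_add]

/-- `M(a₁,a₂) = ∫_{−∞}^{∞} (e^{ia₁z} − 1 − ia₁z)(e^{−ia₂z} − 1 + ia₂z)/z⁴ dz` converges and
equals `(π/6)[(3a₂−a₁)a₁|a₁| + (3a₁−a₂)a₂|a₂| + (a₁−a₂)²|a₁−a₂|]`; the integrand is
extended continuously by `a₁²a₂²/4` at `z = 0`. -/
theorem integral_exp_prod_div_quartic (a₁ a₂ : ℝ) :
    Integrable (fun z : ℝ => if z = 0 then ((a₁ ^ 2 * a₂ ^ 2 / 4 : ℝ) : ℂ)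
      else (Complex.exp (Complex.I * a₁ * z) - 1 - Complex.I * a₁ * z) *
        (Complex.exp (-Complex.I * a₂ * z) - 1 + Complex.I * a₂ * z) / (z : ℂ) ^ 4) ∧
    ∫ z : ℝ, (if z = 0 then ((a₁ ^ 2 * a₂ ^ 2 / 4 : ℝ) : ℂ)
      else (Complex.exp (Complex.I * a₁ * z) - 1 - Complex.I * a₁ * z) *
        (Complex.exp (-Complex.I * a₂ * z) - 1 + Complex.I * a₂ * z) / (z : ℂ) ^ 4) =
      ((Real.pi / 6 * ((3 * a₂ - a₁) * a₁ * |a₁| + (3 * a₁ - a₂) * a₂ * |a₂| +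
        (a₁ - a₂) ^ 2 * |a₁ - a₂|) : ℝ) : ℂ) := by
  have hfun : (fun z : ℝ => if z = 0 then ((a₁ ^ 2 * a₂ ^ 2 / 4 : ℝ) : ℂ)
      else (Complex.exp (Complex.I * a₁ * z) - 1 - Complex.I * a₁ * z) *
        (Complex.exp (-Complex.I * a₂ * z) - 1 + Complex.I * a₂ * z) / (z : ℂ) ^ 4)
      = phi a₁ a₂ := rfl
  constructor
  · rw [hfun]; exact phi_integrable a₁ a₂
  · rw [hfun, integral_phi, hh0]
    rcases le_total 0 a₁ with p1 | p1 <;> rcases le_total 0 a₂ with p2 | p2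
    · rcases le_total a₁ a₂ with q | q
      · rw [val_nonneg p1 q, Complex.real_smul, ← Complex.ofReal_mul]
        congr 1
        rw [abs_of_nonneg p1, abs_of_nonneg p2, abs_of_nonpos (by linarith : a₁ - a₂ ≤ 0)]
        ring
      · rw [val_swap, val_nonneg p2 q, Complex.real_smul, ← Complex.ofReal_mul]
        congr 1
        rw [abs_of_nonneg p1, abs_of_nonneg p2, abs_of_nonneg (by linarith : (0:ℝ) ≤ a₁ - a₂)]
        ring
    · rw [val_swap, val_mixed p2 p1, smul_zero]
      symm
      rw [Complex.ofReal_eq_zero]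
      rw [abs_of_nonneg p1, abs_of_nonpos p2, abs_of_nonneg (by linarith : (0:ℝ) ≤ a₁ - a₂)]
      ring
    · rw [val_mixed p1 p2, smul_zero]
      symm
      rw [Complex.ofReal_eq_zero]
      rw [abs_of_nonpos p1, abs_of_nonneg p2, abs_of_nonpos (by linarith : a₁ - a₂ ≤ 0)]
      ring
    · rcases le_total a₁ a₂ with q | q
      · rw [val_nonpos q p2, Complex.real_smul, ← Complex.ofReal_mul]
        congr 1
        rw [abs_of_nonpos p1, abs_of_nonpos p2, abs_of_nonpos (by linarith : a₁ - a₂ ≤ 0)]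
        ring
      · rw [val_swap, val_nonpos q p1, Complex.real_smul, ← Complex.ofReal_mul]
        congr 1
        rw [abs_of_nonpos p1, abs_of_nonpos p2, abs_of_nonneg (by linarith : (0:ℝ) ≤ a₁ - a₂)]
        ring
end
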